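/- arXiv:1807.08078 — 7 statements merged into one kernel-verified Lean document; each statement's English description precedes it below -/
import Mathlib

section
/- Let G=(V,E) be a general dissimilarity graph and let S⊆E be a non-top cover of all unbalanced cycles of G. Then G can be converted into a general metric graph by only increasing weights of edges in S: there exists a weight function w' on E with w'(e)≥w(e) for every e∈E and w'(e)=w(e) for every e∉S, such that (G,w') is a general metric graph. -/
open SimpleGraph

noncomputable section

variable {V : Type*}

/-- The length of a walk: the sum of the weights of its edges. -/
def wlen {G : SimpleGraph V} (w : Sym2 V → ℝ) {u v : V} (p : G.Walk u v) : ℝ :=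
  (p.edges.map w).sum

/-- The shortest-path distance between two vertices: the minimum length of a path. -/
def spDist (G : SimpleGraph V) (w : Sym2 V → ℝ) (u v : V) : ℝ :=
  sInf {x : ℝ | ∃ p : G.Walk u v, p.IsPath ∧ wlen w p = x}

/-- `(G, w)` is a general metric graph: the weight of every edge equals the
shortest-path distance between its endpoints. -/
def IsMetricGraph (G : SimpleGraph V) (w : Sym2 V → ℝ) : Prop :=
  ∀ u v : V, G.Adj u v → w s(u, v) = spDist G w u v

/-- `e` is a top edge of the closed walk `p`: it lies on `p` and its weight strictly
exceeds the sum of the weights of all the other edges of `p`. -/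
def IsTopEdge {G : SimpleGraph V} (w : Sym2 V → ℝ) {v : V} (p : G.Walk v v)
    (e : Sym2 V) : Prop :=
  e ∈ p.edges ∧ (p.edges.map w).sum - w e < w e

/-- A cycle is unbalanced if it has a top edge. -/
def IsUnbalanced {G : SimpleGraph V} (w : Sym2 V → ℝ) {v : V} (p : G.Walk v v) : Prop :=
  ∃ e, IsTopEdge w p e

/-- `S` is a regular cover of all unbalanced cycles of `G`:
it contains at least one edge of every unbalanced cycle. -/
def RegularCover (G : SimpleGraph V) (w : Sym2 V → ℝ) (S : Set (Sym2 V)) : Prop :=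
  ∀ (v : V) (p : G.Walk v v), p.IsCycle → IsUnbalanced w p → ∃ e ∈ p.edges, e ∈ S

/-- `S` is a non-top cover of all unbalanced cycles of `G`:
it contains at least one non-top edge of every unbalanced cycle. -/
def NonTopCover (G : SimpleGraph V) (w : Sym2 V → ℝ) (S : Set (Sym2 V)) : Prop :=
  ∀ (v : V) (p : G.Walk v v), p.IsCycle → IsUnbalanced w p →
    ∃ e ∈ p.edges, e ∈ S ∧ ¬ IsTopEdge w p e

section Helpers
variable {G : SimpleGraph V} {w : Sym2 V → ℝ}

lemma wlen_nil (u : V) : wlen w (Walk.nil : G.Walk u u) = 0 := by simp [wlen]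

lemma wlen_cons {u x v : V} (h : G.Adj u x) (p : G.Walk x v) :
    wlen w (Walk.cons h p) = w s(u, x) + wlen w p := by simp [wlen]

lemma wlen_nonneg (hw : ∀ e ∈ G.edgeSet, 0 ≤ w e) {u v : V} (p : G.Walk u v) :
    0 ≤ wlen w p :=
  List.sum_nonneg (by
    intro x hx
    obtain ⟨e, he, rfl⟩ := List.mem_map.1 hx
    exact hw e (p.edges_subset_edgeSet he))

lemma spDist_le (hw : ∀ e ∈ G.edgeSet, 0 ≤ w e) {u v : V} (p : G.Walk u v)
    (hp : p.IsPath) : spDist G w u v ≤ wlen w p :=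
  csInf_le ⟨0, by rintro x ⟨q, _, rfl⟩; exact wlen_nonneg hw q⟩ ⟨p, hp, rfl⟩

lemma le_spDist [DecidableEq V] {u v : V} (hr : G.Reachable u v) {c : ℝ}
    (h : ∀ p : G.Walk u v, p.IsPath → c ≤ wlen w p) : c ≤ spDist G w u v := by
  obtain ⟨q⟩ := hr
  exact le_csInf ⟨wlen w q.bypass, q.bypass, q.bypass_isPath, rfl⟩
    (by rintro x ⟨p, hp, rfl⟩; exact h p hp)

lemma spDist_le_wlen_walk [DecidableEq V] (hw : ∀ e ∈ G.edgeSet, 0 ≤ w e)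
    {u v : V} (p : G.Walk u v) : spDist G w u v ≤ wlen w p := by
  refine (spDist_le hw p.bypass p.bypass_isPath).trans ?_
  have hnd : p.bypass.edges.Nodup := p.bypass_isPath.isTrail.edges_nodup
  obtain ⟨l, hperm, hsub⟩ := List.Nodup.subperm hnd p.edges_bypass_subset
  have h1 : (l.map w).sum = wlen w p.bypass := (hperm.map w).sum_eq
  have h2 : (l.map w).sum ≤ (p.edges.map w).sum := by
    refine List.Sublist.sum_le_sum (hsub.map w) ?_
    intro x hx
    obtain ⟨e, he, rfl⟩ := List.mem_map.1 hx
    exact hw e (p.edges_subset_edgeSet he)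
  calc wlen w p.bypass = (l.map w).sum := h1.symm
    _ ≤ _ := h2

lemma spDist_symm' (G : SimpleGraph V) (w : Sym2 V → ℝ) (u v : V) :
    spDist G w u v = spDist G w v u := by
  unfold spDist
  congr 1
  ext x
  constructor
  · rintro ⟨p, hp, rfl⟩
    exact ⟨p.reverse, hp.reverse, by simp [wlen, List.sum_reverse]⟩
  · rintro ⟨p, hp, rfl⟩
    exact ⟨p.reverse, hp.reverse, by simp [wlen, List.sum_reverse]⟩

lemma spDist_triangle [DecidableEq V] (hw : ∀ e ∈ G.edgeSet, 0 ≤ w e)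
    (hconn : G.Connected) (a x b : V) :
    spDist G w a b ≤ spDist G w a x + spDist G w x b := by
  have h1 : spDist G w a b - spDist G w x b ≤ spDist G w a x := by
    refine le_spDist (hconn.preconnected a x) ?_
    intro r _
    have h2 : spDist G w a b - wlen w r ≤ spDist G w x b := by
      refine le_spDist (hconn.preconnected x b) ?_
      intro s _
      have h3 := spDist_le_wlen_walk hw (r.append s)
      have happ : wlen w (r.append s) = wlen w r + wlen w s := by simp [wlen]
      linarith
    linarith
  linarith

end Helpers

/-- If `S ⊆ E` is a non-top cover of all unbalanced cycles of a general
dissimilarity graph `G`, then `G` can be converted into a general metric graph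
by only increasing weights of edges in `S`. -/
theorem stmt1 [Fintype V] (G : SimpleGraph V) (hconn : G.Connected)
    (w : Sym2 V → ℝ) (hw : ∀ e ∈ G.edgeSet, 0 < w e)
    (S : Set (Sym2 V)) (hSE : S ⊆ G.edgeSet) (hS : NonTopCover G w S) :
    ∃ w' : Sym2 V → ℝ,
      (∀ e ∈ G.edgeSet, w e ≤ w' e) ∧
      (∀ e ∈ G.edgeSet, e ∉ S → w' e = w e) ∧
      IsMetricGraph G w' := by
  classical
  set Ω : ℝ := ∑ e : Sym2 V, |w e| with hΩdef
  have hΩ0 : 0 ≤ Ω := Finset.sum_nonneg fun e _ => abs_nonneg _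
  have hΩ1 : ∀ e : Sym2 V, w e ≤ Ω := by
    intro e
    calc w e ≤ |w e| := le_abs_self _
      _ ≤ Ω := Finset.single_le_sum (fun f _ => abs_nonneg (w f)) (Finset.mem_univ e)
  set wΩ : Sym2 V → ℝ := fun e => if e ∈ S then Ω else w e with hwΩdef
  have hwΩ0 : ∀ e ∈ G.edgeSet, 0 ≤ wΩ e := by
    intro e he
    by_cases hs : e ∈ S <;> simp [hwΩdef, hs, hΩ0, (hw e he).le]
  -- key cycle lemma
  have hkey : ∀ (u v : V), G.Adj u v → ∀ p : G.Walk u v, p.IsPath →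
      s(u,v) ∉ p.edges → (∀ f ∈ p.edges, f ∉ S) → w s(u,v) ≤ wlen w p := by
    intro u v h p hp hep hpS
    by_contra hlt
    push_neg at hlt
    have hsw : w s(v,u) = w s(u,v) := by rw [Sym2.eq_swap]
    have hcyc : (Walk.cons h.symm p).IsCycle :=
      (Walk.cons_isCycle_iff p h.symm).2 ⟨hp, by rwa [Sym2.eq_swap]⟩
    have hsum : ((Walk.cons h.symm p).edges.map w).sum = w s(v,u) + wlen w p := by
      simp [wlen]
    have htop : IsTopEdge w (Walk.cons h.symm p) s(v,u) := by
      refine ⟨by simp, ?_⟩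
      rw [hsum, hsw]
      linarith
    obtain ⟨g, hg, hgS, hgnt⟩ := hS v _ hcyc ⟨_, htop⟩
    rw [Walk.edges_cons, List.mem_cons] at hg
    rcases hg with rfl | hg'
    · exact hgnt htop
    · exact hpS g hg' hgS
  -- per-path bound under wΩ
  have hperpath : ∀ (u v : V), G.Adj u v → ∀ p : G.Walk u v, p.IsPath →
      w s(u,v) ≤ wlen wΩ p := by
    intro u v h p hp
    have hnn : ∀ x ∈ p.edges.map wΩ, 0 ≤ x := by
      rintro x hx
      obtain ⟨f, hf, rfl⟩ := List.mem_map.1 hx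
      exact hwΩ0 f (p.edges_subset_edgeSet hf)
    by_cases hmeet : ∃ f ∈ p.edges, f ∈ S
    · obtain ⟨f, hf, hfS⟩ := hmeet
      have h1 : wΩ f ≤ wlen wΩ p :=
        List.single_le_sum hnn _ (List.mem_map_of_mem (f := wΩ) hf)
      have h2 : wΩ f = Ω := by simp [hwΩdef, hfS]
      have h3 := hΩ1 s(u,v)
      rw [h2] at h1
      linarith
    · push_neg at hmeet
      by_cases hep : s(u,v) ∈ p.edges
      · have h1 : wΩ s(u,v) ≤ wlen wΩ p :=
          List.single_le_sum hnn _ (List.mem_map_of_mem (f := wΩ) hep)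
        have h2 : wΩ s(u,v) = w s(u,v) := by simp [hwΩdef, hmeet _ hep]
        rwa [h2] at h1
      · have h1 := hkey u v h p hp hep hmeet
        have h2 : wlen wΩ p = wlen w p := by
          unfold wlen
          congr 1
          refine List.map_congr_left ?_
          intro f hf
          simp [hwΩdef, hmeet f hf]
        linarith
  have hsymm : ∀ a b : V, spDist G wΩ a b = spDist G wΩ b a := spDist_symm' G wΩ
  set w' : Sym2 V → ℝ := fun e =>
    if e ∈ S then Sym2.lift ⟨fun a b => spDist G wΩ a b, fun a b => hsymm a b⟩ e
    else w e with hw'def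
  have hwD : ∀ u v : V, G.Adj u v → w s(u,v) ≤ spDist G wΩ u v := by
    intro u v h
    exact le_spDist (hconn.preconnected u v) (fun p hp => hperpath u v h p hp)
  have hDle : ∀ u v : V, G.Adj u v → spDist G wΩ u v ≤ wΩ s(u,v) := by
    intro u v h
    have hp : (Walk.cons h Walk.nil).IsPath := by
      simp [Walk.cons_isPath_iff, h.ne]
    have h1 := spDist_le hwΩ0 _ hp
    simpa [wlen] using h1
  have hw'edge : ∀ u v : V, G.Adj u v → w' s(u,v) = spDist G wΩ u v := by
    intro u v h
    by_cases hs : s(u,v) ∈ S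
    · simp [hw'def, hs]
    · have h1 := hDle u v h
      have h2 : wΩ s(u,v) = w s(u,v) := by simp [hwΩdef, hs]
      rw [h2] at h1
      have h3 := hwD u v h
      have h4 : w' s(u,v) = w s(u,v) := by simp [hw'def, hs]
      rw [h4]
      linarith
  have hww' : ∀ e ∈ G.edgeSet, w e ≤ w' e := by
    intro e
    induction e using Sym2.ind with
    | _ u v =>
      intro he
      have h : G.Adj u v := (G.mem_edgeSet).1 he
      rw [hw'edge u v h]
      exact hwD u v h
  have hw'0 : ∀ e ∈ G.edgeSet, 0 ≤ w' e :=
    fun e he => le_trans (hw e he).le (hww' e he)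
  have hchain : ∀ (a b : V) (p : G.Walk a b), spDist G wΩ a b ≤ wlen w' p := by
    intro a b p
    induction p with
    | nil =>
      rename_i c
      have h1 := spDist_le hwΩ0 (Walk.nil : G.Walk c c) Walk.IsPath.nil
      simpa [wlen] using h1
    | @cons a x b h q ih =>
      rw [wlen_cons, hw'edge _ _ h]
      have h1 := spDist_triangle hwΩ0 hconn a x b
      linarith
  refine ⟨w', hww', fun e _ hs => by simp [hw'def, hs], ?_⟩
  intro u v h
  have h1 : spDist G w' u v ≤ w' s(u,v) := by
    have hp : (Walk.cons h Walk.nil).IsPath := by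
      simp [Walk.cons_isPath_iff, h.ne]
    have h2 := spDist_le hw'0 _ hp
    simpa [wlen] using h2
  have h2 : w' s(u,v) ≤ spDist G w' u v := by
    rw [hw'edge u v h]
    exact le_spDist (hconn.preconnected u v) (fun p _ => hchain u v p)
  linarith
end
end

section
/- Let G=(V,E) be a general dissimilarity graph, and suppose there is a weight function w' on E with w'(e)≥w(e) for all e∈E and w'(e)=w(e) for all e∉S, such that (G,w') is a general metric graph. Then S is a non-top cover of all unbalanced cycles of G, i.e., S contains a non-top edge of every unbalanced cycle. Combined with sufficiency, weights of edges in S⊆E can be increased to convert G into a general metric graph if and only if S is a non-top cover of all unbalanced cycles of G. -/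
open SimpleGraph

noncomputable section

variable {V : Type*}

namespace MyAux

variable {G : SimpleGraph V} {w : Sym2 V → ℝ}

lemma sum_map_le_of_nodup_subset {α : Type*} {l₁ l₂ : List α} {f : α → ℝ}
    (h₁ : l₁.Nodup) (hsub : l₁ ⊆ l₂) (h0 : ∀ a ∈ l₂, 0 ≤ f a) :
    (l₁.map f).sum ≤ (l₂.map f).sum := by
  obtain ⟨l, hl, hs⟩ := h₁.subperm hsub
  calc (l₁.map f).sum = (l.map f).sum := ((hl.map f).sum_eq).symm
    _ ≤ (l₂.map f).sum := (hs.map f).sum_le_sum (by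
        intro a ha
        obtain ⟨b, hb, rfl⟩ := List.mem_map.1 ha
        exact h0 b hb)

lemma wlen_nonneg (hw : ∀ e ∈ G.edgeSet, 0 ≤ w e) {u v : V} (p : G.Walk u v) :
    0 ≤ wlen w p := by
  apply List.sum_nonneg
  intro x hx
  obtain ⟨e, he, rfl⟩ := List.mem_map.1 hx
  exact hw e (p.edges_subset_edgeSet he)

lemma wlen_nil {u : V} : wlen w (Walk.nil : G.Walk u u) = 0 := by simp [wlen]

lemma wlen_cons {u x v : V} (h : G.Adj u x) (p : G.Walk x v) :
    wlen w (Walk.cons h p) = w s(u, x) + wlen w p := by simp [wlen]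

lemma wlen_append {u v x : V} (p : G.Walk u v) (q : G.Walk v x) :
    wlen w (p.append q) = wlen w p + wlen w q := by
  simp [wlen, Walk.edges_append]

lemma wlen_reverse {u v : V} (p : G.Walk u v) : wlen w p.reverse = wlen w p := by
  simp [wlen, Walk.edges_reverse, List.sum_reverse]

lemma exists_isPath (hconn : G.Connected) (u v : V) : ∃ p : G.Walk u v, p.IsPath := by
  classical
  obtain ⟨p⟩ := hconn.preconnected u v
  exact ⟨p.bypass, p.bypass_isPath⟩

lemma spSet_nonempty (hconn : G.Connected) (u v : V) :
    {x : ℝ | ∃ p : G.Walk u v, p.IsPath ∧ wlen w p = x}.Nonempty := by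
  obtain ⟨p, hp⟩ := exists_isPath hconn u v
  exact ⟨wlen w p, p, hp, rfl⟩

lemma bddBelow_spSet (hw : ∀ e ∈ G.edgeSet, 0 ≤ w e) (u v : V) :
    BddBelow {x : ℝ | ∃ p : G.Walk u v, p.IsPath ∧ wlen w p = x} := by
  refine ⟨0, ?_⟩
  rintro x ⟨p, _, rfl⟩
  exact wlen_nonneg hw p

lemma spDist_le_wlen (hw : ∀ e ∈ G.edgeSet, 0 ≤ w e) {u v : V} (p : G.Walk u v)
    (hp : p.IsPath) : spDist G w u v ≤ wlen w p :=
  csInf_le (bddBelow_spSet hw u v) ⟨p, hp, rfl⟩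

lemma wlen_bypass_le [DecidableEq V] (hw : ∀ e ∈ G.edgeSet, 0 ≤ w e) {u v : V}
    (p : G.Walk u v) : wlen w p.bypass ≤ wlen w p :=
  sum_map_le_of_nodup_subset p.bypass_isPath.edges_nodup p.edges_bypass_subset
    (fun a ha => hw a (p.edges_subset_edgeSet ha))

lemma spDist_le_wlen_walk (hw : ∀ e ∈ G.edgeSet, 0 ≤ w e) {u v : V} (p : G.Walk u v) :
    spDist G w u v ≤ wlen w p := by
  classical
  exact (spDist_le_wlen hw p.bypass p.bypass_isPath).trans (wlen_bypass_le hw p)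

lemma spDist_symm (u v : V) : spDist G w u v = spDist G w v u := by
  unfold spDist
  congr 1
  ext x
  constructor
  · rintro ⟨p, hp, rfl⟩
    exact ⟨p.reverse, hp.reverse, wlen_reverse p⟩
  · rintro ⟨p, hp, rfl⟩
    exact ⟨p.reverse, hp.reverse, wlen_reverse p⟩

lemma spDist_triangle (hw : ∀ e ∈ G.edgeSet, 0 ≤ w e) (hconn : G.Connected) (u v x : V) :
    spDist G w u x ≤ spDist G w u v + spDist G w v x := by
  rw [← sub_le_iff_le_add']
  apply le_csInf (spSet_nonempty hconn v x)
  rintro y ⟨q, hq, rfl⟩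
  rw [sub_le_iff_le_add']
  rw [← sub_le_iff_le_add]
  apply le_csInf (spSet_nonempty hconn u v)
  rintro z ⟨p, hp, rfl⟩
  rw [sub_le_iff_le_add]
  have h1 : spDist G w u x ≤ wlen w (p.append q) := spDist_le_wlen_walk hw _
  have h2 : wlen w (p.append q) = wlen w p + wlen w q := wlen_append p q
  linarith

lemma spDist_le_wlen_of_edge_bound {w' : Sym2 V → ℝ} (hw : ∀ e ∈ G.edgeSet, 0 ≤ w e)
    (hconn : G.Connected)
    (hedge : ∀ a b : V, G.Adj a b → spDist G w a b ≤ w' s(a, b)) :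
    ∀ {u v : V} (p : G.Walk u v), spDist G w u v ≤ wlen w' p := by
  intro u v p
  induction p with
  | nil =>
    rw [wlen_nil]
    exact csInf_le (bddBelow_spSet hw _ _) ⟨Walk.nil, Walk.IsPath.nil, wlen_nil⟩
  | @cons a x c h q ih =>
    rw [wlen_cons]
    calc spDist G w a c ≤ spDist G w a x + spDist G w x c := spDist_triangle hw hconn _ _ _
      _ ≤ w' s(a, x) + wlen w' q := add_le_add (hedge a x h) ih

lemma single_isPath {a b : V} (h : G.Adj a b) : (Walk.cons h Walk.nil).IsPath := by
  simp [Walk.isPath_def, h.ne]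

lemma cycle_decomp {v : V} {p : G.Walk v v} (hp : p.IsCycle) {e : Sym2 V}
    (he : e ∈ p.edges) :
    ∃ (a b : V) (h : G.Adj a b) (q : G.Walk b a), q.IsPath ∧ e ∉ q.edges ∧
      e = s(a, b) ∧ p.edges.Perm (e :: q.edges) := by
  classical
  rw [Walk.edges, List.mem_map] at he
  obtain ⟨d, hd, rfl⟩ := he
  have hu : d.fst ∈ p.support := p.dart_fst_mem_support_of_mem_darts hd
  set p' := p.rotate _ hu with hp'def
  have hp' : p'.IsCycle := hp.rotate hu
  have hd' : d ∈ p'.darts := ((p.rotate_darts _ hu).perm.mem_iff).2 hd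
  have h1 : p'.support = d.fst :: p'.support.tail := p'.support_eq_cons
  have h2 : p'.support.tail.Nodup := hp'.2
  have hne : p'.support.tail ≠ [] := by
    have h3 := hp'.three_le_length
    have h4 : p'.support.length = p'.length + 1 := Walk.length_support p'
    intro h
    rw [h1, h] at h4
    simp only [List.length_cons, List.length_nil] at h4
    omega
  have hlast : p'.support.getLast (p'.support_ne_nil) = d.fst := p'.getLast_support
  have hsup : p'.support = p'.support.dropLast ++ [d.fst] := by
    conv_lhs => rw [← List.dropLast_append_getLast (p'.support_ne_nil), hlast]
  have htail : p'.support.tail = p'.support.tail.dropLast ++ [d.fst] := by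
    have h5 : d.fst :: p'.support.tail
        = (d.fst :: p'.support.tail).dropLast ++ [d.fst] := by
      rw [← h1]; exact hsup
    rw [List.dropLast_cons_of_ne_nil hne, List.cons_append] at h5
    exact List.cons_injective h5
  have hdrop : d.fst ∉ p'.support.tail.dropLast := by
    have h2' := h2
    rw [htail] at h2'
    have hdisj := (List.nodup_append.mp h2').2.2
    intro hmem
    exact hdisj _ hmem _ (by simp) rfl
  have hnodup : (p'.darts.map (·.fst)).Nodup := by
    rw [Walk.map_fst_darts, h1, List.dropLast_cons_of_ne_nil hne]
    exact List.Nodup.cons hdrop (h2.sublist (List.dropLast_sublist _))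
  obtain ⟨x, hadj, q, hq⟩ := Walk.not_nil_iff.mp hp'.not_nil
  have hdfst : d = ⟨(d.fst, x), hadj⟩ := by
    rw [hq, Walk.darts_cons, List.mem_cons] at hd'
    rcases hd' with h | h
    · exact h
    · exfalso
      rw [hq, Walk.darts_cons] at hnodup
      simp only [List.map_cons, List.nodup_cons] at hnodup
      exact hnodup.1 (List.mem_map.2 ⟨d, h, rfl⟩)
  have hcyc' : (Walk.cons hadj q).IsCycle := hq ▸ hp'
  obtain ⟨hqpath, hqe⟩ := (Walk.cons_isCycle_iff q hadj).mp hcyc'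
  have hedge : d.edge = s(d.fst, x) := by rw [hdfst]; rfl
  refine ⟨d.fst, x, hadj, q, hqpath, ?_, hedge, ?_⟩
  · rw [hedge]; exact hqe
  · have hper : p.edges.Perm p'.edges := ((p.rotate_edges _ hu).perm).symm
    have h6 : p'.edges = s(d.fst, x) :: q.edges := by rw [hq, Walk.edges_cons]
    rw [hedge, ← h6]
    exact hper

lemma top_unique (hw : ∀ e ∈ G.edgeSet, 0 < w e) {v : V} {p : G.Walk v v}
    (hp : p.IsCycle) {e f : Sym2 V} (he : IsTopEdge w p e) (hf : IsTopEdge w p f) :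
    e = f := by
  classical
  by_contra hne
  have hper1 : p.edges.Perm (e :: p.edges.erase e) := List.perm_cons_erase he.1
  have hfmem : f ∈ p.edges.erase e := (List.mem_erase_of_ne (Ne.symm hne)).2 hf.1
  have hper2 : (p.edges.erase e).Perm (f :: (p.edges.erase e).erase f) :=
    List.perm_cons_erase hfmem
  set l2 := (p.edges.erase e).erase f with hl2def
  have hsum : (p.edges.map w).sum = w e + (w f + (l2.map w).sum) := by
    rw [(hper1.map w).sum_eq]
    simp only [List.map_cons, List.sum_cons]
    rw [(hper2.map w).sum_eq]
    simp only [List.map_cons, List.sum_cons]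
  have hl2pos : 0 < (l2.map w).sum := by
    apply List.sum_pos
    · intro x hx
      obtain ⟨g, hg, rfl⟩ := List.mem_map.1 hx
      have hg' : g ∈ p.edges := List.erase_subset (List.erase_subset hg)
      exact hw g (p.edges_subset_edgeSet hg')
    · have h3 := hp.three_le_length
      have hlen : p.edges.length = p.length := p.length_edges
      have hlen2 : l2.length = p.edges.length - 1 - 1 := by
        rw [hl2def, List.length_erase_of_mem hfmem, List.length_erase_of_mem he.1]
      intro hnil
      rw [List.map_eq_nil_iff] at hnil
      rw [hnil] at hlen2
      simp only [List.length_nil] at hlen2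
      omega
  have h1 := he.2
  have h2 := hf.2
  linarith

end MyAux

/-- Weights of edges in `S ⊆ E` can be increased to convert `G` into a general
metric graph if and only if `S` is a non-top cover of all unbalanced cycles of `G`. -/
theorem stmt5 [Fintype V] (G : SimpleGraph V) (hconn : G.Connected)
    (w : Sym2 V → ℝ) (hw : ∀ e ∈ G.edgeSet, 0 < w e)
    (S : Set (Sym2 V)) (hSE : S ⊆ G.edgeSet) :
    (∃ w' : Sym2 V → ℝ,
      (∀ e ∈ G.edgeSet, w e ≤ w' e) ∧
      (∀ e ∈ G.edgeSet, e ∉ S → w' e = w e) ∧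
      IsMetricGraph G w') ↔ NonTopCover G w S := by
  classical
  constructor
  · -- necessity
    rintro ⟨w', hge, heqw, hmet⟩ v p hcyc hunb
    by_contra hno
    push_neg at hno
    obtain ⟨e, he⟩ := hunb
    obtain ⟨a, b, hadj, q, hqp, hnotq, hEeq, hperm⟩ := MyAux.cycle_decomp hcyc he.1
    have hw'nn : ∀ f ∈ G.edgeSet, 0 ≤ w' f := fun f hf => le_trans (hw f hf).le (hge f hf)
    have hqS : ∀ f ∈ q.edges, f ∉ S := by
      intro f hf hfS
      have hfp : f ∈ p.edges := hperm.symm.subset (List.mem_cons_of_mem _ hf)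
      have htf : IsTopEdge w p f := hno f hfp hfS
      have hef : e = f := MyAux.top_unique hw hcyc he htf
      exact hnotq (hef ▸ hf)
    subst hEeq
    have hmete : w' s(a, b) = spDist G w' a b := hmet a b hadj
    have h1 : spDist G w' a b ≤ wlen w' q.reverse :=
      MyAux.spDist_le_wlen hw'nn _ hqp.reverse
    have h2 : wlen w' q.reverse = wlen w q := by
      rw [MyAux.wlen_reverse]
      unfold wlen
      congr 1
      apply List.map_congr_left
      intro f hf
      exact heqw f (q.edges_subset_edgeSet hf) (hqS f hf)
    have h3 : (p.edges.map w).sum = w s(a, b) + wlen w q := by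
      rw [(hperm.map w).sum_eq]
      simp [wlen]
    have h4 := he.2
    have h5 : w s(a, b) ≤ w' s(a, b) := hge _ (p.edges_subset_edgeSet he.1)
    linarith
  · -- sufficiency
    intro hcover
    set B : ℝ := 1 + ∑ f ∈ G.edgeFinset, |w f| with hBdef
    have hBpos : 0 < B := by
      have : (0:ℝ) ≤ ∑ f ∈ G.edgeFinset, |w f| :=
        Finset.sum_nonneg fun i _ => abs_nonneg _
      rw [hBdef]; linarith
    have hBw : ∀ f ∈ G.edgeSet, w f ≤ B := by
      intro f hf
      have h1 : |w f| ≤ ∑ g ∈ G.edgeFinset, |w g| :=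
        Finset.single_le_sum (fun i _ => abs_nonneg (w i)) (mem_edgeFinset.2 hf)
      have h2 : w f ≤ |w f| := le_abs_self _
      rw [hBdef]; linarith
    set wh : Sym2 V → ℝ := fun f => if f ∈ S then B else w f with hwhdef
    have hwhpos : ∀ f ∈ G.edgeSet, 0 < wh f := by
      intro f hf
      by_cases h : f ∈ S
      · simp only [hwhdef, if_pos h]; exact hBpos
      · simp only [hwhdef, if_neg h]; exact hw f hf
    have hwhnn : ∀ f ∈ G.edgeSet, 0 ≤ wh f := fun f hf => (hwhpos f hf).le
    -- key inequality
    have key : ∀ u v : V, G.Adj u v → w s(u, v) ≤ spDist G wh u v := by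
      intro u v hadj
      apply le_csInf (MyAux.spSet_nonempty hconn u v)
      rintro x ⟨Q, hQ, rfl⟩
      by_cases h1 : ∃ f ∈ Q.edges, f ∈ S
      · obtain ⟨f, hf, hfS⟩ := h1
        have hB' : wh f = B := if_pos hfS
        have hle : wh f ≤ wlen wh Q := by
          apply List.single_le_sum
          · intro y hy
            obtain ⟨g, hg, rfl⟩ := List.mem_map.1 hy
            exact hwhnn g (Q.edges_subset_edgeSet hg)
          · exact List.mem_map_of_mem hf
        have huv : w s(u, v) ≤ B := hBw _ (G.mem_edgeSet.2 hadj)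
        linarith
      · push_neg at h1
        have hQw : wlen wh Q = wlen w Q := by
          unfold wlen
          congr 1
          apply List.map_congr_left
          intro f hf
          exact if_neg (h1 f hf)
        rw [hQw]
        by_cases h2 : s(u, v) ∈ Q.edges
        · apply List.single_le_sum
          · intro y hy
            obtain ⟨g, hg, rfl⟩ := List.mem_map.1 hy
            exact (hw g (Q.edges_subset_edgeSet hg)).le
          · exact List.mem_map_of_mem h2
        · by_contra hlt
          push_neg at hlt
          set c : G.Walk v v := Walk.cons hadj.symm Q with hcdef
          have hsvu : s(v, u) = s(u, v) := Sym2.eq_swap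
          have hc : c.IsCycle := by
            rw [hcdef]
            exact (Walk.cons_isCycle_iff Q hadj.symm).2 ⟨hQ, by rwa [hsvu]⟩
          have hcedges : c.edges = s(v, u) :: Q.edges := by
            rw [hcdef, Walk.edges_cons]
          have htop : IsTopEdge w c s(u, v) := by
            constructor
            · rw [hcedges, hsvu]; exact List.mem_cons_self
            · rw [hcedges]
              simp only [List.map_cons, List.sum_cons, hsvu]
              unfold wlen at hlt
              linarith
          obtain ⟨f, hfc, hfS, hfnt⟩ := hcover v c hc ⟨_, htop⟩
          rw [hcedges] at hfc
          rcases List.mem_cons.1 hfc with h | h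
          · exact hfnt (by rw [h, hsvu]; exact htop)
          · exact h1 f h hfS
    -- the modified weights
    set w' : Sym2 V → ℝ := fun f => if f ∈ S then
        Sym2.lift ⟨fun a b => spDist G wh a b, fun a b => MyAux.spDist_symm a b⟩ f
      else w f with hw'def
    have hw'S : ∀ a b : V, s(a, b) ∈ S → w' s(a, b) = spDist G wh a b := by
      intro a b hS
      simp only [hw'def, if_pos hS, Sym2.lift_mk]
    have hw'N : ∀ f, f ∉ S → w' f = w f := by
      intro f hS
      simp only [hw'def, if_neg hS]
    refine ⟨w', ?_, ?_, ?_⟩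
    · intro f hf
      induction f using Sym2.ind with
      | _ a b =>
        by_cases hS : s(a, b) ∈ S
        · rw [hw'S a b hS]; exact key a b (G.mem_edgeSet.1 hf)
        · rw [hw'N _ hS]
    · intro f _ hfS
      exact hw'N f hfS
    · intro u v hadj
      have hw'edge : ∀ a b : V, G.Adj a b → spDist G wh a b ≤ w' s(a, b) := by
        intro a b hab
        by_cases hS : s(a, b) ∈ S
        · rw [hw'S a b hS]
        · rw [hw'N _ hS]
          have h1 := MyAux.spDist_le_wlen hwhnn (Walk.cons hab Walk.nil)
            (MyAux.single_isPath hab)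
          rw [MyAux.wlen_cons, MyAux.wlen_nil] at h1
          have h2 : wh s(a, b) = w s(a, b) := by simp only [hwhdef, if_neg hS]
          linarith
      have hw'nn : ∀ f ∈ G.edgeSet, 0 ≤ w' f := by
        intro f hf
        induction f using Sym2.ind with
        | _ a b =>
          by_cases hS : s(a, b) ∈ S
          · rw [hw'S a b hS]
            exact le_trans (hw _ hf).le (key a b (G.mem_edgeSet.1 hf))
          · rw [hw'N _ hS]; exact (hw _ hf).le
      apply le_antisymm
      · apply le_csInf (MyAux.spSet_nonempty hconn u v)
        rintro x ⟨P, hP, rfl⟩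
        have hDle : spDist G wh u v ≤ wlen w' P :=
          MyAux.spDist_le_wlen_of_edge_bound hwhnn hconn hw'edge P
        by_cases hS : s(u, v) ∈ S
        · rw [hw'S u v hS]; exact hDle
        · rw [hw'N _ hS]; exact le_trans (key u v hadj) hDle
      · have h1 := MyAux.spDist_le_wlen hw'nn (Walk.cons hadj Walk.nil)
          (MyAux.single_isPath hadj)
        rw [MyAux.wlen_cons, MyAux.wlen_nil] at h1
        linarith
end
end

section
/- Let G=(V,E) be an undirected unweighted graph on n=|V| vertices with demand pairs {(sᵢ,tᵢ)}ᵢ₌₁ᵏ such that (sᵢ,tᵢ)∉E for all i. Let G'=(V,E') be the weighted graph with E'=E∪{(sᵢ,tᵢ)}ᵢ₌₁ᵏ, where every edge of E has weight 1 and every edge (sᵢ,tᵢ) has weight n. Then a set M⊆E is a non-top cover of all unbalanced cycles of G' if and only if in the subgraph (V, E∖M) every sᵢ is disconnected from its corresponding tᵢ. Consequently, the minimum size of a multicut of G for the given demand pairs equals the minimum size of a non-top cover of all unbalanced cycles of G'. -/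
open SimpleGraph

noncomputable section

variable {V : Type*}

/-- In the multicut reduction graph `G'`, a set `M ⊆ E` is a non-top cover of
all unbalanced cycles of `G'` iff `M` is a multicut of `G` for the demand
pairs; consequently the minimum size of a multicut of `G` equals the minimum
size of a non-top cover of all unbalanced cycles of `G'`. -/
theorem stmt9 [Fintype V] (G : SimpleGraph V)
    (k : ℕ) (st : Fin k → V × V)
    (hne : ∀ i, (st i).1 ≠ (st i).2)
    (hnadj : ∀ i, ¬ G.Adj (st i).1 (st i).2)
    (G' : SimpleGraph V)
    (hG' : G' = G ⊔ SimpleGraph.fromEdgeSet {e : Sym2 V | ∃ i, e = s((st i).1, (st i).2)})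
    (w : Sym2 V → ℝ)
    (hw1 : ∀ e ∈ G.edgeSet, w e = 1)
    (hwn : ∀ i, w s((st i).1, (st i).2) = (Fintype.card V : ℝ)) :
    (∀ M : Set (Sym2 V), M ⊆ G.edgeSet →
      (NonTopCover G' w M ↔
        ∀ i, ¬ (G.deleteEdges M).Reachable (st i).1 (st i).2)) ∧
    sInf {c : ℕ | ∃ M : Set (Sym2 V), M ⊆ G.edgeSet ∧
        (∀ i, ¬ (G.deleteEdges M).Reachable (st i).1 (st i).2) ∧ M.ncard = c} =
      sInf {c : ℕ | ∃ M : Set (Sym2 V), M ⊆ G'.edgeSet ∧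
        NonTopCover G' w M ∧ M.ncard = c} := by
  classical
  have hGle : G ≤ G' := by rw [hG']; exact le_sup_left
  have hDadj : ∀ i : Fin k, G'.Adj (st i).1 (st i).2 := by
    intro i
    rw [hG', SimpleGraph.sup_adj, SimpleGraph.fromEdgeSet_adj]
    exact Or.inr ⟨⟨i, rfl⟩, hne i⟩
  have hcases : ∀ f ∈ G'.edgeSet,
      (f ∈ G.edgeSet ∧ w f = 1) ∨
      ((∃ i, f = s((st i).1, (st i).2)) ∧ w f = (Fintype.card V : ℝ)) := by
    intro f hf
    rw [hG', SimpleGraph.edgeSet_sup] at hf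
    rcases hf with hf | hf
    · exact Or.inl ⟨hf, hw1 f hf⟩
    · rw [SimpleGraph.edgeSet_fromEdgeSet] at hf
      obtain ⟨⟨i, rfl⟩, -⟩ := hf
      exact Or.inr ⟨⟨i, rfl⟩, hwn i⟩
  have hcard1 : ∀ (_ : V), (1 : ℝ) ≤ (Fintype.card V : ℝ) := by
    intro x
    have : 0 < Fintype.card V := Fintype.card_pos_iff.mpr ⟨x⟩
    exact_mod_cast this
  have hge1 : ∀ (_ : V), ∀ f ∈ G'.edgeSet, (1 : ℝ) ≤ w f := by
    intro x f hf
    rcases hcases f hf with ⟨-, h⟩ | ⟨-, h⟩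
    · rw [h]
    · rw [h]; exact hcard1 x
  -- multicut implies non-top cover
  have ntc : ∀ M : Set (Sym2 V),
      (∀ i, ¬ (G.deleteEdges M).Reachable (st i).1 (st i).2) → NonTopCover G' w M := by
    rintro M hmc v c hc ⟨e, he, het⟩
    set S := (c.edges.map w).sum with hSdef
    have hlen : 3 ≤ c.edges.length := by
      rw [SimpleGraph.Walk.length_edges]; exact hc.three_le_length
    have hSge : (c.edges.length : ℝ) ≤ S := by
      calc (c.edges.length : ℝ) = (c.edges.map (fun _ => (1:ℝ))).sum := by simp
        _ ≤ S := List.sum_le_sum (fun f hf => hge1 v f (c.edges_subset_edgeSet hf))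
    have hS3 : (3 : ℝ) ≤ S := le_trans (by exact_mod_cast hlen) hSge
    have hetop : (∃ i, e = s((st i).1, (st i).2)) ∧ w e = (Fintype.card V : ℝ) := by
      rcases hcases e (c.edges_subset_edgeSet he) with ⟨-, h1⟩ | h
      · exfalso; rw [h1] at het; linarith
      · exact h
    obtain ⟨⟨i, hei⟩, hen⟩ := hetop
    have hother : ∀ f ∈ c.edges, f ≠ e → f ∈ G.edgeSet ∧ w f = 1 := by
      intro f hf hfe
      rcases hcases f (c.edges_subset_edgeSet hf) with h | ⟨-, hfn⟩
      · exact h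
      · exfalso
        have hf' : f ∈ c.edges.erase e := (List.mem_erase_of_ne hfe).mpr hf
        have hperm : c.edges.Perm (e :: f :: ((c.edges.erase e).erase f)) :=
          (List.perm_cons_erase he).trans ((List.perm_cons_erase hf').cons e)
        have hsum : S = w e + (w f + (((c.edges.erase e).erase f).map w).sum) := by
          rw [hSdef, (hperm.map w).sum_eq]
          simp
        have hrest : 0 ≤ (((c.edges.erase e).erase f).map w).sum := by
          apply List.sum_nonneg
          intro x hx
          obtain ⟨g, hg, rfl⟩ := List.mem_map.mp hx
          have hg' : g ∈ c.edges :=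
            List.erase_subset (List.erase_subset hg)
          linarith [hge1 v g (c.edges_subset_edgeSet hg')]
        rw [hen] at het hsum
        rw [hfn] at hsum
        linarith
    have hnottop : ∀ f ∈ c.edges, f ≠ e → ¬ IsTopEdge w c f := by
      rintro f hf hfe ⟨-, hft⟩
      have h1 := (hother f hf hfe).2
      rw [h1] at hft
      linarith
    by_contra hcon
    push_neg at hcon
    have hnM : ∀ f ∈ c.edges, f ≠ e → f ∉ M := fun f hf hfe hfM =>
      hnottop f hf hfe (hcon f hf hfM)
    have hHe : ∀ f ∈ c.edges,
        f ∈ (G.deleteEdges M ⊔ SimpleGraph.fromEdgeSet {e}).edgeSet := by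
      intro f hf
      rw [SimpleGraph.edgeSet_sup]
      by_cases hfe : f = e
      · right
        rw [SimpleGraph.edgeSet_fromEdgeSet]
        refine ⟨by simp [hfe], ?_⟩
        rw [hfe, hei]
        simpa using hne i
      · left
        rw [SimpleGraph.edgeSet_deleteEdges]
        exact ⟨(hother f hf hfe).1, hnM f hf hfe⟩
    have hc' := hc.transfer hHe
    have hkey := (SimpleGraph.adj_and_reachable_delete_edges_iff_exists_cycle
        (G := G.deleteEdges M ⊔ SimpleGraph.fromEdgeSet {e})
        (v := (st i).1) (w := (st i).2)).mpr
        ⟨v, c.transfer _ hHe, hc', by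
          rw [SimpleGraph.Walk.edges_transfer, ← hei]; exact he⟩
    obtain ⟨-, hreach⟩ := hkey
    refine hmc i (hreach.mono ?_)
    intro a b hab
    rw [SimpleGraph.deleteEdges_adj] at hab
    obtain ⟨hab1, hab2⟩ := hab
    rw [SimpleGraph.sup_adj] at hab1
    rcases hab1 with h | h
    · exact h
    · rw [hei, SimpleGraph.fromEdgeSet_adj] at h; exact absurd h.1 hab2
  -- non-top cover implies multicut
  have cut : ∀ M : Set (Sym2 V), NonTopCover G' w M →
      ∀ i, ¬ (G.deleteEdges (M ∩ G.edgeSet)).Reachable (st i).1 (st i).2 := by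
    intro M hntc i hr
    obtain ⟨q⟩ := hr
    have hp : q.toPath.1.IsPath := q.toPath.2
    have hsub : ∀ f ∈ q.toPath.1.edges, f ∈ G'.edgeSet := fun f hf =>
      SimpleGraph.edgeSet_mono (le_trans (SimpleGraph.deleteEdges_le _) hGle)
        (SimpleGraph.Walk.edges_subset_edgeSet _ hf)
    have hsubG : ∀ f ∈ q.toPath.1.edges, f ∈ G.edgeSet ∧ f ∉ M ∩ G.edgeSet := by
      intro f hf
      have := SimpleGraph.Walk.edges_subset_edgeSet _ hf
      rw [SimpleGraph.edgeSet_deleteEdges] at this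
      exact this
    set p' := q.toPath.1.transfer G' hsub with hp'def
    have hadj : G'.Adj (st i).2 (st i).1 := (hDadj i).symm
    set c : G'.Walk (st i).2 (st i).2 := SimpleGraph.Walk.cons hadj p' with hcdef
    have hcyc : c.IsCycle := by
      rw [hcdef, SimpleGraph.Walk.cons_isCycle_iff]
      refine ⟨hp.transfer hsub, ?_⟩
      rw [hp'def, SimpleGraph.Walk.edges_transfer]
      intro hmem
      have := (hsubG _ hmem).1
      rw [Sym2.eq_swap] at this
      exact hnadj i this
    have hedges : c.edges = s((st i).2, (st i).1) :: q.toPath.1.edges := by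
      rw [hcdef, SimpleGraph.Walk.edges_cons, hp'def, SimpleGraph.Walk.edges_transfer]
    have hwtop : w s((st i).2, (st i).1) = (Fintype.card V : ℝ) := by
      rw [Sym2.eq_swap]; exact hwn i
    have hsump : (q.toPath.1.edges.map w).sum = (q.toPath.1.length : ℝ) := by
      rw [List.sum_eq_card_nsmul _ (1 : ℝ)]
      · simp [SimpleGraph.Walk.length_edges]
      · intro x hx
        obtain ⟨g, hg, rfl⟩ := List.mem_map.mp hx
        exact hw1 g (hsubG g hg).1
    have hlt : (q.toPath.1.length : ℝ) < (Fintype.card V : ℝ) := by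
      exact_mod_cast hp.length_lt
    have hub : IsUnbalanced w c := by
      refine ⟨s((st i).2, (st i).1), by rw [hedges]; exact List.mem_cons_self, ?_⟩
      rw [hedges]
      simp only [List.map_cons, List.sum_cons]
      rw [hwtop, hsump]
      linarith
    obtain ⟨f, hfc, hfM, hfnt⟩ := hntc _ c hcyc hub
    have hftop : IsTopEdge w c s((st i).2, (st i).1) := by
      refine ⟨by rw [hedges]; exact List.mem_cons_self, ?_⟩
      rw [hedges]
      simp only [List.map_cons, List.sum_cons]
      rw [hwtop, hsump]
      linarith
    have hfne : f ≠ s((st i).2, (st i).1) := by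
      intro h; rw [h] at hfnt; exact hfnt hftop
    have hfp : f ∈ q.toPath.1.edges := by
      rw [hedges] at hfc
      rcases List.mem_cons.mp hfc with h | h
      · exact absurd h hfne
      · exact h
    exact (hsubG f hfp).2 ⟨hfM, (hsubG f hfp).1⟩
  constructor
  · intro M hME
    have hMint : M ∩ G.edgeSet = M := Set.inter_eq_self_of_subset_left hME
    constructor
    · intro h i
      have := cut M h i
      rwa [hMint] at this
    · exact fun h => ntc M h
  · have hcut0 : ∀ i, ¬ (G.deleteEdges G.edgeSet).Reachable (st i).1 (st i).2 := by
      intro i hr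
      have hbot : G.deleteEdges G.edgeSet = ⊥ := by
        ext a b
        simp [SimpleGraph.deleteEdges_adj]
      rw [hbot] at hr
      exact hne i (SimpleGraph.reachable_bot.mp hr)
    have hLne : {c : ℕ | ∃ M : Set (Sym2 V), M ⊆ G.edgeSet ∧
        (∀ i, ¬ (G.deleteEdges M).Reachable (st i).1 (st i).2) ∧ M.ncard = c}.Nonempty :=
      ⟨G.edgeSet.ncard, G.edgeSet, subset_rfl, hcut0, rfl⟩
    have hRne : {c : ℕ | ∃ M : Set (Sym2 V), M ⊆ G'.edgeSet ∧
        NonTopCover G' w M ∧ M.ncard = c}.Nonempty :=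
      ⟨G.edgeSet.ncard, G.edgeSet, SimpleGraph.edgeSet_mono hGle, ntc _ hcut0, rfl⟩
    apply le_antisymm
    · obtain ⟨M, hMG', hNTC, hMcard⟩ := Nat.sInf_mem hRne
      have h1 : (M ∩ G.edgeSet).ncard ≤ M.ncard :=
        Set.ncard_le_ncard Set.inter_subset_left (Set.toFinite M)
      refine le_trans (Nat.sInf_le ⟨M ∩ G.edgeSet, Set.inter_subset_right, cut M hNTC, rfl⟩) ?_
      omega
    · obtain ⟨M, hME, hmc, hMcard⟩ := Nat.sInf_mem hLne
      exact Nat.sInf_le ⟨M, hME.trans (SimpleGraph.edgeSet_mono hGle), ntc M hmc, hMcard⟩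
end
end

section
/- Let L be a positive integer, and let G=(V,E) be an undirected unweighted graph with source s and sink t such that (s,t)∉E. Let G'=(V,E') be the weighted graph with E'=E∪{(s,t)}, where every edge of E has weight 1 and the edge (s,t) has weight L+1. Then a cycle of G' is unbalanced if and only if it consists of the edge (s,t) together with at most L edges of E; consequently, a set M⊆E is a non-top cover of all unbalanced cycles of G' if and only if after removing M from G no s–t path of length at most L remains, and the minimum size of an L-length-bounded s–t cut of G equals the minimum size of a non-top cover of all unbalanced cycles of G'. -/
open SimpleGraph

noncomputable section

variable {V : Type*}

private lemma list_sum_ones' {α : Type*} (w : α → ℝ) (l : List α)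
    (h : ∀ e ∈ l, w e = 1) : (l.map w).sum = l.length := by
  induction l with
  | nil => simp
  | cons a l ih =>
    simp only [List.map_cons, List.sum_cons, List.length_cons]
    rw [h a (List.mem_cons_self), ih (fun e he => h e (List.mem_cons_of_mem _ he))]
    push_cast
    ring

private lemma edges_mapLe' {G G' : SimpleGraph V} (h : G ≤ G') {u v : V} (p : G.Walk u v) :
    (p.mapLe h).edges = p.edges := by
  simp only [Walk.edges_map]
  have : Sym2.map ⇑(Hom.ofLE h) = id := by
    ext e
    induction e with
    | _ x y => rfl
  simp [this]

/-- Extract an `s`-`t` path from a cycle through the edge `s(s,t)`. -/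
private lemma cycle_to_path' {G' : SimpleGraph V} {s t : V}
    {v : V} (c : G'.Walk v v) (hc : c.IsCycle) (hmem : s(s, t) ∈ c.edges) :
    ∃ p : G'.Walk s t, p.IsPath ∧ s(s, t) ∉ p.edges ∧
      (∀ e ∈ p.edges, e ∈ c.edges) ∧ p.length + 1 = c.length := by
  classical
  have hs : s ∈ c.support := Walk.fst_mem_support_of_mem_edges c hmem
  have hc' : (c.rotate s hs).IsCycle := hc.rotate hs
  have hperm : List.Perm (c.rotate s hs).edges c.edges := (c.rotate_edges s hs).perm
  have hmem' : s(s, t) ∈ (c.rotate s hs).edges := hperm.mem_iff.mpr hmem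
  have hlen' : (c.rotate s hs).length = c.length := by
    rw [← Walk.length_edges, ← Walk.length_edges, hperm.length_eq]
  cases hC : c.rotate s hs with
  | nil => rw [hC] at hc'; exact absurd hc' (Walk.IsCycle.not_of_nil)
  | @cons _ x _ h q =>
    rw [hC] at hc' hmem' hlen'
    rw [Walk.cons_isCycle_iff] at hc'
    obtain ⟨hqp, hqe⟩ := hc'
    rw [Walk.edges_cons, List.mem_cons] at hmem'
    by_cases hcase : s(s, t) = s(s, x)
    · have hx : x = t := (Sym2.congr_right.1 hcase).symm
      subst hx
      refine ⟨q.reverse, hqp.reverse, ?_, ?_, ?_⟩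
      · rw [Walk.edges_reverse, List.mem_reverse]
        exact hqe
      · intro e he
        rw [Walk.edges_reverse, List.mem_reverse] at he
        exact hperm.mem_iff.mp (by rw [hC]; exact List.mem_cons_of_mem _ he)
      · rw [Walk.length_reverse, ← hlen', Walk.length_cons]
    · have hmemq : s(s, t) ∈ q.edges := hmem'.resolve_left hcase
      have hsx : s ≠ x := h.ne
      obtain ⟨y, h2, q2, hr⟩ := Walk.exists_eq_cons_of_ne hsx q.reverse
      have hrp : q.reverse.IsPath := hqp.reverse
      rw [hr, Walk.cons_isPath_iff] at hrp
      obtain ⟨hq2p, hsns⟩ := hrp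
      have hmemr : s(s, t) ∈ q.reverse.edges := by
        rw [Walk.edges_reverse, List.mem_reverse]; exact hmemq
      rw [hr, Walk.edges_cons, List.mem_cons] at hmemr
      have hy : y = t := by
        rcases hmemr with h' | h'
        · exact (Sym2.congr_right.1 h').symm
        · exact absurd (Walk.fst_mem_support_of_mem_edges q2 h') hsns
      have hy' : t = y := hy.symm
      subst hy'
      have hq2s : s(s, t) ∉ q2.edges := fun h' =>
        hsns (Walk.fst_mem_support_of_mem_edges q2 h')
      refine ⟨Walk.cons h q2.reverse, ?_, ?_, ?_, ?_⟩
      · rw [Walk.cons_isPath_iff]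
        refine ⟨hq2p.reverse, ?_⟩
        rw [Walk.support_reverse, List.mem_reverse]
        exact hsns
      · rw [Walk.edges_cons, List.mem_cons]
        rintro (h' | h')
        · exact hcase h'
        · rw [Walk.edges_reverse, List.mem_reverse] at h'
          exact hq2s h'
      · intro e he
        rw [Walk.edges_cons, List.mem_cons] at he
        refine hperm.mem_iff.mp ?_
        rw [hC, Walk.edges_cons, List.mem_cons]
        rcases he with h' | h'
        · exact Or.inl h'
        · rw [Walk.edges_reverse, List.mem_reverse] at h'
          right
          have : e ∈ q.reverse.edges := by
            rw [hr, Walk.edges_cons]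
            exact List.mem_cons_of_mem _ h'
          rw [Walk.edges_reverse, List.mem_reverse] at this
          exact this
      · have h1 : q.reverse.length = q2.length + 1 := by rw [hr, Walk.length_cons]
        rw [Walk.length_reverse] at h1
        rw [Walk.length_cons, Walk.length_reverse, ← hlen', Walk.length_cons, h1]

private lemma sum_edges_with' {G' : SimpleGraph V} {s t : V} {w : Sym2 V → ℝ} {L : ℕ}
    (hwe : ∀ e ∈ G'.edgeSet, e ≠ s(s, t) → w e = 1) (hwL : w s(s, t) = (L : ℝ) + 1)
    {u v : V} (p : G'.Walk u v) (hnd : p.edges.Nodup) (hmem : s(s, t) ∈ p.edges) :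
    (p.edges.map w).sum = (L : ℝ) + p.length := by
  classical
  have hperm := List.perm_cons_erase hmem
  rw [(hperm.map w).sum_eq, List.map_cons, List.sum_cons, hwL,
    list_sum_ones' w _ (fun e he => by
      rw [List.Nodup.mem_erase_iff hnd] at he
      exact hwe e (Walk.edges_subset_edgeSet p he.2) he.1)]
  have hlen : (p.edges.erase s(s, t)).length + 1 = p.length := by
    rw [List.length_erase_add_one hmem, Walk.length_edges]
  have : ((p.edges.erase s(s, t)).length : ℝ) + 1 = p.length := by exact_mod_cast hlen
  linarith

private lemma sum_edges_without' {G' : SimpleGraph V} {s t : V} {w : Sym2 V → ℝ}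
    (hwe : ∀ e ∈ G'.edgeSet, e ≠ s(s, t) → w e = 1)
    {u v : V} (p : G'.Walk u v) (hmem : s(s, t) ∉ p.edges) :
    (p.edges.map w).sum = p.length := by
  rw [list_sum_ones' w _ (fun e he =>
    hwe e (Walk.edges_subset_edgeSet p he) (fun h => hmem (h ▸ he))), Walk.length_edges]

private lemma unbalanced_iff' {G' : SimpleGraph V} {s t : V} {w : Sym2 V → ℝ} {L : ℕ}
    (hL : 0 < L)
    (hwe : ∀ e ∈ G'.edgeSet, e ≠ s(s, t) → w e = 1) (hwL : w s(s, t) = (L : ℝ) + 1)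
    {v : V} (p : G'.Walk v v) (hc : p.IsCycle) :
    IsUnbalanced w p ↔ s(s, t) ∈ p.edges ∧ p.length ≤ L + 1 := by
  have h3 : 3 ≤ p.length := hc.three_le_length
  have h3' : (3 : ℝ) ≤ p.length := by exact_mod_cast h3
  have hL' : (1 : ℝ) ≤ L := by exact_mod_cast hL
  constructor
  · rintro ⟨e, he, hlt⟩
    by_cases hmem : s(s, t) ∈ p.edges
    · have hsum := sum_edges_with' hwe hwL p hc.edges_nodup hmem
      rw [hsum] at hlt
      by_cases hes : e = s(s, t)
      · subst hes
        rw [hwL] at hlt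
        refine ⟨hmem, ?_⟩
        have h1 : (p.length : ℝ) < (L : ℝ) + 2 := by linarith
        have h2 : p.length < L + 2 := by exact_mod_cast h1
        omega
      · rw [hwe e (Walk.edges_subset_edgeSet p he) hes] at hlt
        linarith
    · have hsum := sum_edges_without' hwe p hmem
      rw [hsum] at hlt
      have hes : e ≠ s(s, t) := fun h => hmem (h ▸ he)
      rw [hwe e (Walk.edges_subset_edgeSet p he) hes] at hlt
      linarith
  · rintro ⟨hmem, hlen⟩
    refine ⟨s(s, t), hmem, ?_⟩
    rw [sum_edges_with' hwe hwL p hc.edges_nodup hmem, hwL]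
    have : (p.length : ℝ) ≤ (L : ℝ) + 1 := by exact_mod_cast hlen
    linarith

private lemma other_not_top' {G' : SimpleGraph V} {s t : V} {w : Sym2 V → ℝ} {L : ℕ}
    (hL : 0 < L)
    (hwe : ∀ e ∈ G'.edgeSet, e ≠ s(s, t) → w e = 1) (hwL : w s(s, t) = (L : ℝ) + 1)
    {v : V} (p : G'.Walk v v) (hc : p.IsCycle)
    (hmem : s(s, t) ∈ p.edges) {e : Sym2 V} (he : e ∈ p.edges) (hne : e ≠ s(s, t)) :
    ¬ IsTopEdge w p e := by
  rintro ⟨-, hlt⟩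
  rw [sum_edges_with' hwe hwL p hc.edges_nodup hmem,
    hwe e (Walk.edges_subset_edgeSet p he) hne] at hlt
  have h3' : (3 : ℝ) ≤ p.length := by exact_mod_cast hc.three_le_length
  have hL' : (1 : ℝ) ≤ L := by exact_mod_cast hL
  linarith

/-- The length-bounded cut reduction: in `G'` (weight `1` on edges of `G`,
weight `L+1` on the added edge `(s,t)`) a cycle is unbalanced iff it consists
of the edge `(s,t)` together with at most `L` edges of `E`; a set `M ⊆ E` is a
non-top cover of all unbalanced cycles of `G'` iff removing `M` from `G`
destroys all `s`–`t` paths with at most `L` edges; and the minimum size of an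
`L`-length-bounded `s`–`t` cut of `G` equals the minimum size of a non-top
cover of all unbalanced cycles of `G'`. -/
theorem stmt10 [Fintype V] (G : SimpleGraph V) (L : ℕ) (hL : 0 < L)
    (s t : V) (hst : s ≠ t) (hnadj : ¬ G.Adj s t)
    (G' : SimpleGraph V)
    (hG' : G' = G ⊔ SimpleGraph.fromEdgeSet {s(s, t)})
    (w : Sym2 V → ℝ)
    (hw1 : ∀ e ∈ G.edgeSet, w e = 1)
    (hwL : w s(s, t) = (L : ℝ) + 1) :
    (∀ (v : V) (p : G'.Walk v v), p.IsCycle →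
      (IsUnbalanced w p ↔ s(s, t) ∈ p.edges ∧ p.length ≤ L + 1)) ∧
    (∀ M : Set (Sym2 V), M ⊆ G.edgeSet →
      (NonTopCover G' w M ↔
        ∀ p : (G.deleteEdges M).Walk s t, p.IsPath → L < p.length)) ∧
    sInf {c : ℕ | ∃ M : Set (Sym2 V), M ⊆ G.edgeSet ∧
        (∀ p : (G.deleteEdges M).Walk s t, p.IsPath → L < p.length) ∧ M.ncard = c} =
      sInf {c : ℕ | ∃ M : Set (Sym2 V), M ⊆ G'.edgeSet ∧
        NonTopCover G' w M ∧ M.ncard = c} := by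
  classical
  -- basic facts about G'
  have hGle : G ≤ G' := hG' ▸ le_sup_left
  have hadjst : G'.Adj s t := by
    rw [hG', sup_adj, fromEdgeSet_adj]
    exact Or.inr ⟨Set.mem_singleton _, hst⟩
  have hstE : s(s, t) ∉ G.edgeSet := hnadj
  have hEdge : ∀ e, e ∈ G'.edgeSet ↔ e ∈ G.edgeSet ∨ e = s(s, t) := by
    intro e
    rw [hG', edgeSet_sup, edgeSet_fromEdgeSet]
    constructor
    · rintro (h | ⟨h, -⟩)
      · exact Or.inl h
      · exact Or.inr h
    · rintro (h | rfl)
      · exact Or.inl h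
      · exact Or.inr ⟨rfl, by simpa using hst⟩
  have hwe : ∀ e ∈ G'.edgeSet, e ≠ s(s, t) → w e = 1 := fun e he hne =>
    hw1 e (((hEdge e).1 he).resolve_right hne)
  have key1 : ∀ (v : V) (p : G'.Walk v v), p.IsCycle →
      (IsUnbalanced w p ↔ s(s, t) ∈ p.edges ∧ p.length ≤ L + 1) :=
    fun v p hc => unbalanced_iff' hL hwe hwL p hc
  -- Part 2
  have key2 : ∀ M : Set (Sym2 V), M ⊆ G.edgeSet →
      (NonTopCover G' w M ↔
        ∀ p : (G.deleteEdges M).Walk s t, p.IsPath → L < p.length) := by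
    intro M hM
    have hdle : G.deleteEdges M ≤ G' := le_trans (deleteEdges_le M) hGle
    constructor
    · intro hntc p hp
      by_contra hcon
      push_neg at hcon
      -- build the cycle
      set p' := p.mapLe hdle with hp'def
      have hp'edges : p'.edges = p.edges := edges_mapLe' hdle p
      have hp'path : p'.IsPath := (Walk.mapLe_isPath hdle).mpr hp
      have hstnp : s(t, s) ∉ p'.edges := by
        rw [Sym2.eq_swap, hp'edges]
        intro hmem
        exact hstE (edgeSet_deleteEdges M ▸ Walk.edges_subset_edgeSet p hmem).1
      have hcyc : (Walk.cons hadjst.symm p').IsCycle :=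
        (Walk.cons_isCycle_iff p' hadjst.symm).mpr ⟨hp'path, hstnp⟩
      have hmemc : s(s, t) ∈ (Walk.cons hadjst.symm p').edges := by
        rw [Walk.edges_cons, Sym2.eq_swap]
        exact List.mem_cons_self
      have hlenc : (Walk.cons hadjst.symm p').length ≤ L + 1 := by
        rw [Walk.length_cons, Walk.length_map]
        omega
      obtain ⟨e, hec, heM, hent⟩ := hntc t (Walk.cons hadjst.symm p') hcyc
        ((key1 t _ hcyc).mpr ⟨hmemc, hlenc⟩)
      rw [Walk.edges_cons, List.mem_cons] at hec
      rcases hec with rfl | hec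
      · exact hstE (hM (by rwa [Sym2.eq_swap] at heM))
      · rw [hp'edges] at hec
        exact ((edgeSet_deleteEdges M ▸ Walk.edges_subset_edgeSet p hec).2) heM
    · intro hcut v c hc hunb
      obtain ⟨hmem, hlen⟩ := (key1 v c hc).mp hunb
      obtain ⟨p, hpp, hpst, hpsub, hplen⟩ := cycle_to_path' c hc hmem
      have hpG : ∀ e ∈ p.edges, e ∈ G.edgeSet := fun e he =>
        ((hEdge e).1 (Walk.edges_subset_edgeSet p he)).resolve_right
          (fun h => hpst (h ▸ he))
      have hex : ∃ e ∈ p.edges, e ∈ M := by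
        by_contra hcon
        push_neg at hcon
        have htr : ∀ e ∈ p.edges, e ∈ (G.deleteEdges M).edgeSet := fun e he => by
          rw [edgeSet_deleteEdges]
          exact ⟨hpG e he, hcon e he⟩
        have := hcut (p.transfer (G.deleteEdges M) htr) (hpp.transfer htr)
        rw [Walk.length_transfer] at this
        omega
      obtain ⟨e, hep, heM⟩ := hex
      exact ⟨e, hpsub e hep, heM,
        other_not_top' hL hwe hwL c hc hmem (hpsub e hep)
          (fun h => hpst (h ▸ hep))⟩
  refine ⟨key1, key2, ?_⟩
  -- Part 3
  set A := {c : ℕ | ∃ M : Set (Sym2 V), M ⊆ G.edgeSet ∧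
      (∀ p : (G.deleteEdges M).Walk s t, p.IsPath → L < p.length) ∧ M.ncard = c}
  set B := {c : ℕ | ∃ M : Set (Sym2 V), M ⊆ G'.edgeSet ∧
      NonTopCover G' w M ∧ M.ncard = c}
  have hAB : A ⊆ B := by
    rintro c ⟨M, hM, hcut, rfl⟩
    exact ⟨M, fun e he => edgeSet_mono hGle (hM he), (key2 M hM).mpr hcut, rfl⟩
  have hAne : A.Nonempty := by
    refine ⟨(G.edgeSet).ncard, G.edgeSet, le_refl _, ?_, rfl⟩
    intro p hp
    obtain ⟨x, h, q, -⟩ := Walk.exists_eq_cons_of_ne hst p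
    rw [deleteEdges_adj] at h
    exact absurd ((mem_edgeSet G).mpr h.1) h.2
  apply le_antisymm
  · -- sInf A ≤ sInf B
    have hBne : B.Nonempty := hAne.mono hAB
    obtain ⟨M, hMsub, hMntc, hMcard⟩ := Nat.sInf_mem hBne
    set M' := M ∩ G.edgeSet with hM'def
    have hM'sub : M' ⊆ G.edgeSet := Set.inter_subset_right
    have hM'ntc : NonTopCover G' w M' := by
      intro v c hc hunb
      obtain ⟨e, hec, heM, hent⟩ := hMntc v c hc hunb
      obtain ⟨hmem, hlen⟩ := (key1 v c hc).mp hunb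
      have hne : e ≠ s(s, t) := by
        rintro rfl
        exact hent ⟨hmem, by
          rw [sum_edges_with' hwe hwL c hc.edges_nodup hmem, hwL]
          have h1 : (c.length : ℝ) ≤ (L : ℝ) + 1 := by exact_mod_cast hlen
          linarith⟩
      refine ⟨e, hec, ⟨heM, ?_⟩, hent⟩
      exact ((hEdge e).1 (Walk.edges_subset_edgeSet c hec)).resolve_right hne
    have hM'A : M'.ncard ∈ A := ⟨M', hM'sub, (key2 M' hM'sub).mp hM'ntc, rfl⟩
    calc sInf A ≤ M'.ncard := Nat.sInf_le hM'A
      _ ≤ M.ncard := Set.ncard_le_ncard Set.inter_subset_left M.toFinite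
      _ = sInf B := hMcard
  · exact Nat.sInf_le (hAB (Nat.sInf_mem hAne))
end
end

section
/- Let G=(V,E) be a general dissimilarity graph, let T={(s₁,t₁),...,(s_{|T|},t_{|T|})} be the set of edges that are top edges of some unbalanced cycle of G, and let L = 1 + max_{e∈E} w(e). Form G'=(V',E') by adding, for each 1≤i≤|T| and each 1≤j≤|E|+1, a new vertex v_{ij} together with edges (sᵢ,v_{ij}) of weight L and (tᵢ,v_{ij}) of weight L − w((sᵢ,tᵢ)). Then for every unbalanced cycle C of G with top edge (sᵢ,tᵢ) and every j, the cycle C' = (C∖(sᵢ,tᵢ)) ∪ {(sᵢ,v_{ij}), (tᵢ,v_{ij})} is an unbalanced cycle of G' with top edge (sᵢ,v_{ij}). -/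
open SimpleGraph

noncomputable section

variable {V : Type*}

/-- The number of distinct shortest paths from `u` to `v`. -/
def csp (G : SimpleGraph V) (w : Sym2 V → ℝ) (u v : V) : ℕ :=
  Nat.card {p : G.Walk u v // p.IsPath ∧ wlen w p = spDist G w u v}

/-- `c` is the edge set of some cycle of `G`.  (A cycle is determined, up to
rotation and reflection, by its edge set.) -/
def IsCycleSet [DecidableEq V] (G : SimpleGraph V) (c : Finset (Sym2 V)) : Prop :=
  ∃ (v : V) (p : G.Walk v v), p.IsCycle ∧ p.edges.toFinset = c

/-- `e` is a top edge of the cycle with edge set `c`: it lies in `c` and its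
weight strictly exceeds the sum of the weights of all the other edges of `c`. -/
def TopOfSet [DecidableEq V] (w : Sym2 V → ℝ) (c : Finset (Sym2 V)) (e : Sym2 V) : Prop :=
  e ∈ c ∧ ∑ f ∈ c.erase e, w f < w e

/-- A cycle is unbalanced if it has a top edge. -/
def UnbalancedSet [DecidableEq V] (w : Sym2 V → ℝ) (c : Finset (Sym2 V)) : Prop :=
  ∃ e, TopOfSet w c e

/-- `S` contains at least one edge of every unbalanced cycle. -/
def RegularCoverSet [DecidableEq V] (G : SimpleGraph V) (w : Sym2 V → ℝ)
    (S : Set (Sym2 V)) : Prop :=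
  ∀ c : Finset (Sym2 V), IsCycleSet G c → UnbalancedSet w c → ∃ e ∈ c, e ∈ S

/-- `S` contains at least one non-top edge of every unbalanced cycle. -/
def NonTopCoverSet [DecidableEq V] (G : SimpleGraph V) (w : Sym2 V → ℝ)
    (S : Set (Sym2 V)) : Prop :=
  ∀ c : Finset (Sym2 V), IsCycleSet G c → UnbalancedSet w c →
    ∃ e ∈ c, e ∈ S ∧ ¬ TopOfSet w c e

/-- The deficit of a cycle with edge set `c`: the largest edge weight minus the
sum of the weights of all the other edges. -/
def deficitSet (w : Sym2 V → ℝ) (c : Finset (Sym2 V)) : ℝ :=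
  2 * sSup (w '' (c : Set (Sym2 V))) - ∑ f ∈ c, w f

/-- `δ(G)`: the maximum deficit over all cycles of `G`. -/
def deltaG [DecidableEq V] (G : SimpleGraph V) (w : Sym2 V → ℝ) : ℝ :=
  sSup {x : ℝ | ∃ c : Finset (Sym2 V), IsCycleSet G c ∧ deficitSet w c = x}

/-- `N_T(e, a)`: the number of distinct unbalanced cycles of deficit `a`
whose top edge is `e`. -/
def NT [DecidableEq V] (G : SimpleGraph V) (w : Sym2 V → ℝ) (e : Sym2 V) (a : ℝ) : ℕ :=
  Nat.card {c : Finset (Sym2 V) // IsCycleSet G c ∧ TopOfSet w c e ∧ deficitSet w c = a}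

/-- `N_U(e, a)`: the number of distinct unbalanced cycles of deficit `a`
containing `e` as a non-top edge. -/
def NU [DecidableEq V] (G : SimpleGraph V) (w : Sym2 V → ℝ) (e : Sym2 V) (a : ℝ) : ℕ :=
  Nat.card {c : Finset (Sym2 V) // IsCycleSet G c ∧ UnbalancedSet w c ∧
    e ∈ c ∧ ¬ TopOfSet w c e ∧ deficitSet w c = a}

/-- Decompose a cycle (given by edge set) through an edge `s(a,b)` into the edge plus
a path from `b` to `a` avoiding that edge. -/
lemma aux_cycle_decomp {V : Type*} [DecidableEq V] {G : SimpleGraph V} {c : Finset (Sym2 V)}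
    (hc : ∃ (v : V) (p : G.Walk v v), p.IsCycle ∧ p.edges.toFinset = c) {a b : V}
    (hab : s(a, b) ∈ c) :
    ∃ q : G.Walk b a, q.IsPath ∧ s(a, b) ∉ q.edges ∧ q.edges.toFinset = c.erase s(a, b) := by
  obtain ⟨v, p, hcyc, rfl⟩ := hc
  have hmem : s(a, b) ∈ p.edges := by simpa using hab
  have ha : a ∈ p.support := p.fst_mem_support_of_mem_edges hmem
  have hcyc' : (p.rotate a ha).IsCycle := hcyc.rotate ha
  have hpermF : (p.rotate a ha).edges.toFinset = p.edges.toFinset :=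
    List.toFinset_eq_of_perm _ _ (p.rotate_edges a ha).perm
  have hmem' : s(a, b) ∈ (p.rotate a ha).edges := ((p.rotate_edges a ha).perm.mem_iff).mpr hmem
  set p' := p.rotate a ha with hp'
  have hnil : ¬ p'.Nil := hcyc'.not_nil
  have hP : Walk.cons (p'.adj_snd hnil) p'.tail = p' := p'.cons_tail_eq hnil
  set h := p'.adj_snd hnil with hh
  set d := p'.getVert 1 with hd
  set q0 := p'.tail with hq0'
  have hcc : (Walk.cons h q0).IsCycle := by rw [hP]; exact hcyc'
  rw [Walk.cons_isCycle_iff] at hcc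
  obtain ⟨hq0path, hq0ne⟩ := hcc
  have hedges' : p'.edges = s(a, d) :: q0.edges := by
    have := congrArg Walk.edges hP
    rw [Walk.edges_cons] at this
    exact this.symm
  have had : a ≠ d := h.ne
  by_cases hbd : b = d
  · subst hbd
    refine ⟨q0, hq0path, hq0ne, ?_⟩
    rw [← hpermF, hedges', List.toFinset_cons, Finset.erase_insert (by simpa using hq0ne)]
  · have hne : s(a, b) ≠ s(a, d) := by
      intro hEq
      rcases Sym2.eq_iff.mp hEq with ⟨_, h2⟩ | ⟨h1, _⟩
      · exact hbd h2
      · exact had h1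
    have hmq : s(a, b) ∈ q0.edges := by
      have := hmem'
      rw [hedges'] at this
      rcases List.mem_cons.mp this with h' | h'
      · exact absurd h' hne
      · exact h'
    have hr : q0.reverse.IsPath := hq0path.reverse
    have hmr : s(a, b) ∈ q0.reverse.edges := by
      rw [Walk.edges_reverse]; simpa using hmq
    have hnil2 : ¬ q0.reverse.Nil := by
      intro hN
      have h0 : q0.reverse.length = 0 := Walk.nil_iff_length_eq.mp hN
      have : q0.reverse.edges = [] := List.length_eq_zero_iff.mp (by rw [Walk.length_edges, h0])
      rw [this] at hmr; simp at hmr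
    have hP2 : Walk.cons (q0.reverse.adj_snd hnil2) q0.reverse.tail = q0.reverse :=
      q0.reverse.cons_tail_eq hnil2
    set h2 := q0.reverse.adj_snd hnil2 with hh2
    set d2 := q0.reverse.getVert 1 with hd2
    set r := q0.reverse.tail with hrdef
    have hpath2 : (Walk.cons h2 r).IsPath := by rw [hP2]; exact hr
    rw [Walk.cons_isPath_iff] at hpath2
    obtain ⟨hrpath, hans⟩ := hpath2
    have hed2 : q0.reverse.edges = s(a, d2) :: r.edges := by
      have := congrArg Walk.edges hP2
      rw [Walk.edges_cons] at this
      exact this.symm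
    have had2 : a ≠ d2 := h2.ne
    have hbd2 : b = d2 := by
      have := hmr
      rw [hed2] at this
      rcases List.mem_cons.mp this with h' | h'
      · rcases Sym2.eq_iff.mp h' with ⟨_, hx⟩ | ⟨hx, _⟩
        · exact hx
        · exact absurd hx had2
      · exact absurd (r.fst_mem_support_of_mem_edges h') hans
    have hanr : s(a, b) ∉ r.edges := fun h' => hans (r.fst_mem_support_of_mem_edges h')
    refine ⟨(r.copy hbd2.symm rfl).append (Walk.cons h.symm Walk.nil), ?_, ?_, ?_⟩
    · rw [Walk.isPath_def, Walk.support_append, Walk.support_copy]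
      simp only [Walk.support_cons, Walk.support_nil, List.tail_cons]
      rw [List.nodup_append]
      refine ⟨hrpath.support_nodup, List.nodup_singleton a, ?_⟩
      intro y hy z hz
      simp only [List.mem_singleton] at hz
      subst hz
      rintro rfl
      exact hans hy
    · rw [Walk.edges_append, Walk.edges_copy]
      simp only [Walk.edges_cons, Walk.edges_nil, List.mem_append, List.mem_cons,
        List.not_mem_nil, or_false, not_or]
      refine ⟨hanr, ?_⟩
      intro hEq
      rcases Sym2.eq_iff.mp hEq with ⟨hx, _⟩ | ⟨_, hx⟩
      · exact had hx
      · exact hbd hx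
    · rw [← hpermF, hedges']
      have hq0F : q0.edges.toFinset = insert s(a, b) r.edges.toFinset := by
        have : q0.edges.toFinset = q0.reverse.edges.toFinset := by
          rw [Walk.edges_reverse, List.toFinset_reverse]
        rw [this, hed2, ← hbd2, List.toFinset_cons]
      rw [List.toFinset_cons, hq0F, Finset.insert_comm,
        Finset.erase_insert (by simp [hne, hanr]), Walk.edges_append, Walk.edges_copy]
      simp only [Walk.edges_cons, Walk.edges_nil, List.toFinset_append, List.toFinset_cons,
        List.toFinset_nil, insert_empty_eq]
      rw [Sym2.eq_swap]
      ext z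
      simp only [Finset.mem_insert, Finset.mem_union, Finset.mem_singleton, List.mem_toFinset]
      tauto

/-- Build a cycle through a new vertex `x` from a path `q : b → a` and edges `x—f a`, `x—f b`. -/
lemma aux_build {V W : Type*} [DecidableEq V] [DecidableEq W] {G : SimpleGraph V} {G' : SimpleGraph W}
    (f : G →g G') (hf : Function.Injective f) {a b : V} {x : W} (hab : a ≠ b)
    (hxa : G'.Adj x (f a)) (hxb : G'.Adj x (f b)) (hx : ∀ v, f v ≠ x)
    {q : G.Walk b a} (hq : q.IsPath) :
    ∃ p' : G'.Walk x x, p'.IsCycle ∧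
      p'.edges.toFinset = q.edges.toFinset.image (Sym2.map f) ∪ {s(f a, x), s(f b, x)} := by
  refine ⟨Walk.cons hxb ((q.map f).append (Walk.cons hxa.symm Walk.nil)), ?_, ?_⟩
  · rw [Walk.cons_isCycle_iff]
    have hmap : (q.map f).IsPath := Walk.map_isPath_of_injective hf hq
    have hxs : x ∉ (q.map f).support := by
      rw [Walk.support_map]
      intro hmem
      obtain ⟨u, _, hu⟩ := List.mem_map.mp hmem
      exact hx u hu
    constructor
    · rw [Walk.isPath_def, Walk.support_append]
      simp only [Walk.support_cons, Walk.support_nil, List.tail_cons]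
      rw [List.nodup_append]
      refine ⟨hmap.support_nodup, List.nodup_singleton x, ?_⟩
      intro y hy z hz
      simp only [List.mem_singleton] at hz
      subst hz
      rintro rfl
      exact hxs hy
    · rw [Walk.edges_append, Walk.edges_map]
      simp only [Walk.edges_cons, Walk.edges_nil, List.mem_append, List.mem_cons,
        List.not_mem_nil, or_false, not_or]
      constructor
      · intro hmem
        obtain ⟨e, _, he⟩ := List.mem_map.mp hmem
        induction e using Sym2.ind with
        | _ u v =>
          rw [Sym2.map_pair_eq] at he
          rcases Sym2.eq_iff.mp he with ⟨h1, _⟩ | ⟨_, h1⟩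
          · exact hx u h1
          · exact hx v h1
      · intro hEq
        rcases Sym2.eq_iff.mp hEq with ⟨h1, _⟩ | ⟨_, h1⟩
        · exact hx a h1.symm
        · exact hab (hf h1.symm)
  · rw [Walk.edges_cons, Walk.edges_append, Walk.edges_map,
      show s(x, f b) = s(f b, x) from Sym2.eq_swap]
    ext z
    simp only [Walk.edges_cons, Walk.edges_nil, List.toFinset_cons, List.mem_insert_iff,
      List.mem_toFinset, List.mem_append, List.mem_map, List.mem_cons, List.not_mem_nil,
      or_false, Finset.mem_insert, Finset.mem_union, Finset.mem_singleton, Finset.mem_image]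
    constructor
    · rintro (rfl | ⟨e, he, rfl⟩ | rfl)
      · exact Or.inr (Or.inr rfl)
      · exact Or.inl ⟨e, he, rfl⟩
      · exact Or.inr (Or.inl rfl)
    · rintro (⟨e, he, rfl⟩ | rfl | rfl)
      · exact Or.inr (Or.inl ⟨e, he, rfl⟩)
      · exact Or.inr (Or.inr rfl)
      · exact Or.inl rfl


/-- In the GMVID → GMVD reduction graph `G'` (built by attaching, for each top
edge `(sᵢ,tᵢ)` of `G` and each `1 ≤ j ≤ |E|+1`, a new vertex `v_{ij}` with
edges `(sᵢ,v_{ij})` of weight `L` and `(tᵢ,v_{ij})` of weight `L − w(sᵢ,tᵢ)`),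
every unbalanced cycle `C` of `G` with top edge `(sᵢ,tᵢ)` gives, for every `j`,
an unbalanced cycle `C' = (C ∖ (sᵢ,tᵢ)) ∪ {(sᵢ,v_{ij}), (tᵢ,v_{ij})}` of `G'`
with top edge `(sᵢ,v_{ij})`. -/

theorem stmt11 {ι : Type*} [DecidableEq ι] [Fintype V] [DecidableEq V]
    (G : SimpleGraph V) [DecidableRel G.Adj] (hconn : G.Connected)
    (w : Sym2 V → ℝ) (hw : ∀ e ∈ G.edgeSet, 0 < w e)
    (st : ι → V × V)
    (hT1 : ∀ i : ι, ∃ c : Finset (Sym2 V),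
      IsCycleSet G c ∧ TopOfSet w c s((st i).1, (st i).2))
    (hT2 : ∀ (e : Sym2 V) (c : Finset (Sym2 V)), IsCycleSet G c → TopOfSet w c e →
      ∃ i : ι, e = s((st i).1, (st i).2))
    (L : ℝ) (hL : L = 1 + sSup (w '' G.edgeSet))
    (G' : SimpleGraph (V ⊕ ι × Fin (G.edgeFinset.card + 1)))
    (hG' : G' = SimpleGraph.fromEdgeSet
      ((Sym2.map Sum.inl '' G.edgeSet) ∪
        {e | ∃ (i : ι) (j : Fin (G.edgeFinset.card + 1)),
          e = s(Sum.inl (st i).1, Sum.inr (i, j))} ∪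
        {e | ∃ (i : ι) (j : Fin (G.edgeFinset.card + 1)),
          e = s(Sum.inl (st i).2, Sum.inr (i, j))}))
    (w' : Sym2 (V ⊕ ι × Fin (G.edgeFinset.card + 1)) → ℝ)
    (hw'1 : ∀ e ∈ G.edgeSet, w' (Sym2.map Sum.inl e) = w e)
    (hw'2 : ∀ (i : ι) (j : Fin (G.edgeFinset.card + 1)),
      w' s(Sum.inl (st i).1, Sum.inr (i, j)) = L)
    (hw'3 : ∀ (i : ι) (j : Fin (G.edgeFinset.card + 1)),
      w' s(Sum.inl (st i).2, Sum.inr (i, j)) = L - w s((st i).1, (st i).2)) :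
    ∀ c : Finset (Sym2 V), IsCycleSet G c →
      ∀ i : ι, TopOfSet w c s((st i).1, (st i).2) →
        ∀ j : Fin (G.edgeFinset.card + 1),
          IsCycleSet G'
            ((c.erase s((st i).1, (st i).2)).image (Sym2.map Sum.inl) ∪
              {s(Sum.inl (st i).1, Sum.inr (i, j)), s(Sum.inl (st i).2, Sum.inr (i, j))}) ∧
          UnbalancedSet w'
            ((c.erase s((st i).1, (st i).2)).image (Sym2.map Sum.inl) ∪
              {s(Sum.inl (st i).1, Sum.inr (i, j)), s(Sum.inl (st i).2, Sum.inr (i, j))}) ∧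
          TopOfSet w'
            ((c.erase s((st i).1, (st i).2)).image (Sym2.map Sum.inl) ∪
              {s(Sum.inl (st i).1, Sum.inr (i, j)), s(Sum.inl (st i).2, Sum.inr (i, j))})
            s(Sum.inl (st i).1, Sum.inr (i, j)) := by
  intro c hc i htop j
  obtain ⟨hecmem, hsum⟩ := htop
  set s : V := (st i).1 with hs
  set t : V := (st i).2 with ht
  set x : V ⊕ ι × Fin (G.edgeFinset.card + 1) := Sum.inr (i, j) with hx
  -- edges of the cycle lie in G
  have hsub : ∀ f ∈ c, f ∈ G.edgeSet := by
    obtain ⟨v, p, hp, rfl⟩ := hc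
    intro f hf
    exact p.edges_subset_edgeSet (by simpa using hf)
  have hst : s ≠ t := by
    have : G.Adj s t := (SimpleGraph.mem_edgeSet G).mp (hsub _ hecmem)
    exact this.ne
  -- the graph homomorphism
  have hadj : ∀ {u v : V}, G.Adj u v → G'.Adj (Sum.inl u) (Sum.inl v) := by
    intro u v huv
    rw [hG', SimpleGraph.fromEdgeSet_adj]
    refine ⟨Or.inl (Or.inl ⟨s(u, v), huv, by rw [Sym2.map_pair_eq]⟩), ?_⟩
    simp only [ne_eq, Sum.inl.injEq]
    exact huv.ne
  let f : G →g G' := ⟨Sum.inl, hadj⟩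
  have hfinj : Function.Injective (f : V → V ⊕ ι × Fin (G.edgeFinset.card + 1)) :=
    Sum.inl_injective
  have hxa : G'.Adj x (Sum.inl s) := by
    rw [hG', SimpleGraph.fromEdgeSet_adj]
    exact ⟨Or.inl (Or.inr ⟨i, j, Sym2.eq_swap⟩), by simp [hx]⟩
  have hxb : G'.Adj x (Sum.inl t) := by
    rw [hG', SimpleGraph.fromEdgeSet_adj]
    exact ⟨Or.inr ⟨i, j, Sym2.eq_swap⟩, by simp [hx]⟩
  have hxne : ∀ v : V, f v ≠ x := by intro v h; simp [f, hx] at h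
  -- decompose the cycle
  obtain ⟨q, hqpath, hqne, hqF⟩ := aux_cycle_decomp hc hecmem
  obtain ⟨p', hp'cyc, hp'F⟩ := aux_build f hfinj hst hxa hxb hxne hqpath
  rw [hqF] at hp'F
  have hcycset : IsCycleSet G'
      ((c.erase s(s, t)).image (Sym2.map Sum.inl) ∪
        {s(Sum.inl s, x), s(Sum.inl t, x)}) := ⟨x, p', hp'cyc, hp'F⟩
  -- weights
  set A : Finset (Sym2 (V ⊕ ι × Fin (G.edgeFinset.card + 1))) :=
    (c.erase s(s, t)).image (Sym2.map Sum.inl) with hA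
  have hxnotA : ∀ y ∈ A, s(Sum.inl s, x) ≠ y ∧ s(Sum.inl t, x) ≠ y := by
    intro y hy
    obtain ⟨z, _, rfl⟩ := Finset.mem_image.mp hy
    induction z using Sym2.ind with
    | _ u v =>
      rw [Sym2.map_pair_eq]
      constructor <;>
      · intro hEq
        rcases Sym2.eq_iff.mp hEq with ⟨_, h2⟩ | ⟨_, h2⟩ <;> simp [hx] at h2
  have h12 : s(Sum.inl s, x) ≠ s(Sum.inl t, x) := by
    intro hEq
    rcases Sym2.eq_iff.mp hEq with ⟨h1, _⟩ | ⟨h1, _⟩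
    · exact hst (Sum.inl_injective h1)
    · simp [hx] at h1
  have htop' : TopOfSet w' (A ∪ {s(Sum.inl s, x), s(Sum.inl t, x)}) s(Sum.inl s, x) := by
    constructor
    · exact Finset.mem_union_right _ (Finset.mem_insert_self _ _)
    · have herase : (A ∪ {s(Sum.inl s, x), s(Sum.inl t, x)}).erase s(Sum.inl s, x)
          = A ∪ {s(Sum.inl t, x)} := by
        rw [Finset.erase_union_distrib,
          Finset.erase_eq_of_notMem (fun h => (hxnotA _ h).1 rfl),
          Finset.erase_insert (by simpa using h12)]
      rw [herase, Finset.sum_union (by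
        simp only [Finset.disjoint_singleton_right]
        exact fun h => (hxnotA _ h).2 rfl)]
      have hsumA : ∑ y ∈ A, w' y = ∑ z ∈ c.erase s(s, t), w z := by
        rw [hA, Finset.sum_image (fun z _ z' _ h => Sym2.map.injective Sum.inl_injective h)]
        refine Finset.sum_congr rfl fun z hz => ?_
        exact hw'1 z (hsub z (Finset.mem_of_mem_erase hz))
      rw [hsumA, Finset.sum_singleton]
      have h2 : w' s(Sum.inl t, x) = L - w s(s, t) := hw'3 i j
      have h1 : w' s(Sum.inl s, x) = L := hw'2 i j
      rw [h1, h2]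
      linarith [hsum]
  exact ⟨hcycset, ⟨_, htop'⟩, htop'⟩
end
end

section
/- Let G=(V,E) be a general dissimilarity graph, let T={(s₁,t₁),...,(s_{|T|},t_{|T|})} be the set of edges that are top edges of some unbalanced cycle of G, and let L = 1 + max_{e∈E} w(e). Form G'=(V',E') by adding, for each 1≤i≤|T| and each 1≤j≤|E|+1, a new vertex v_{ij} together with edges (sᵢ,v_{ij}) of weight L and (tᵢ,v_{ij}) of weight L − w((sᵢ,tᵢ)). Then every unbalanced cycle of G' is either an unbalanced cycle of G, or is obtained from an unbalanced cycle C of G with top edge (sᵢ,tᵢ) by replacing the edge (sᵢ,tᵢ) with the pair of edges (sᵢ,v_{ij}),(tᵢ,v_{ij}) for some j. -/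
open SimpleGraph

noncomputable section

variable {V : Type*}

lemma list_toFinset_map' {α β : Type*} [DecidableEq α] [DecidableEq β] (f : α → β)
    (l : List α) : (l.map f).toFinset = l.toFinset.image f := by
  ext b; simp

lemma lift_walk' {α β : Type*} {A : SimpleGraph α} {B : SimpleGraph β} (φ : A →g B)
    (hinj : Function.Injective φ)
    (hrefl : ∀ a b : α, B.Adj (φ a) (φ b) → A.Adj a b) :
    ∀ {x y : β} (r : B.Walk x y), (∀ v ∈ r.support, ∃ u, v = φ u) →
      ∀ (a b : α) (hxa : x = φ a) (hyb : y = φ b),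
        ∃ q : A.Walk a b, q.map φ = r.copy hxa hyb := by
  intro x y r
  induction r with
  | nil =>
    intro _ a b hxa hyb
    subst hxa
    obtain rfl : a = b := hinj hyb
    exact ⟨SimpleGraph.Walk.nil, by simp⟩
  | @cons x c y h r' ih =>
    intro hs a b hxa hyb
    subst hxa
    subst hyb
    obtain ⟨u', rfl⟩ := hs c (by simp)
    obtain ⟨q', hq'⟩ := ih (fun v hv => hs v (by simp [hv])) u' b rfl rfl
    rw [SimpleGraph.Walk.copy_rfl_rfl] at hq'
    refine ⟨SimpleGraph.Walk.cons (hrefl a u' h) q', ?_⟩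
    rw [SimpleGraph.Walk.copy_rfl_rfl, SimpleGraph.Walk.map_cons]
    exact congrArg _ hq' 

lemma cycle_decomp' {α : Type*} {A : SimpleGraph α} {z : α} (p : A.Walk z z)
    (hp : p.IsCycle) :
    ∃ (x y : α) (hx : A.Adj z x) (hy : A.Adj y z) (r : A.Walk x y),
      p = SimpleGraph.Walk.cons hx (r.concat hy) := by
  cases p with
  | nil => exact absurd rfl hp.ne_nil
  | @cons _ x _ h q =>
    cases q with
    | nil => exact (A.irrefl h).elim
    | cons h1 q1 =>
      obtain ⟨y, r, hy, hc⟩ := SimpleGraph.Walk.exists_cons_eq_concat h1 q1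
      exact ⟨_, y, h, hy, r, by rw [hc]⟩


/-- In the GMVID → GMVD reduction graph `G'`, every unbalanced cycle of `G'` is
either an unbalanced cycle of `G`, or is obtained from an unbalanced cycle `C`
of `G` with top edge `(sᵢ,tᵢ)` by replacing `(sᵢ,tᵢ)` with the pair of edges
`(sᵢ,v_{ij}), (tᵢ,v_{ij})` for some `j`. -/
theorem stmt12 {ι : Type*} [DecidableEq ι] [Fintype V] [DecidableEq V]
    (G : SimpleGraph V) [DecidableRel G.Adj] (hconn : G.Connected)
    (w : Sym2 V → ℝ) (hw : ∀ e ∈ G.edgeSet, 0 < w e)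
    (st : ι → V × V)
    (hT1 : ∀ i : ι, ∃ c : Finset (Sym2 V),
      IsCycleSet G c ∧ TopOfSet w c s((st i).1, (st i).2))
    (hT2 : ∀ (e : Sym2 V) (c : Finset (Sym2 V)), IsCycleSet G c → TopOfSet w c e →
      ∃ i : ι, e = s((st i).1, (st i).2))
    (L : ℝ) (hL : L = 1 + sSup (w '' G.edgeSet))
    (G' : SimpleGraph (V ⊕ ι × Fin (G.edgeFinset.card + 1)))
    (hG' : G' = SimpleGraph.fromEdgeSet
      ((Sym2.map Sum.inl '' G.edgeSet) ∪
        {e | ∃ (i : ι) (j : Fin (G.edgeFinset.card + 1)),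
          e = s(Sum.inl (st i).1, Sum.inr (i, j))} ∪
        {e | ∃ (i : ι) (j : Fin (G.edgeFinset.card + 1)),
          e = s(Sum.inl (st i).2, Sum.inr (i, j))}))
    (w' : Sym2 (V ⊕ ι × Fin (G.edgeFinset.card + 1)) → ℝ)
    (hw'1 : ∀ e ∈ G.edgeSet, w' (Sym2.map Sum.inl e) = w e)
    (hw'2 : ∀ (i : ι) (j : Fin (G.edgeFinset.card + 1)),
      w' s(Sum.inl (st i).1, Sum.inr (i, j)) = L)
    (hw'3 : ∀ (i : ι) (j : Fin (G.edgeFinset.card + 1)),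
      w' s(Sum.inl (st i).2, Sum.inr (i, j)) = L - w s((st i).1, (st i).2)) :
    ∀ c' : Finset (Sym2 (V ⊕ ι × Fin (G.edgeFinset.card + 1))),
      IsCycleSet G' c' → UnbalancedSet w' c' →
        (∃ c : Finset (Sym2 V), IsCycleSet G c ∧ UnbalancedSet w c ∧
          c' = c.image (Sym2.map Sum.inl)) ∨
        (∃ (c : Finset (Sym2 V)) (i : ι) (j : Fin (G.edgeFinset.card + 1)),
          IsCycleSet G c ∧ UnbalancedSet w c ∧ TopOfSet w c s((st i).1, (st i).2) ∧
          c' = (c.erase s((st i).1, (st i).2)).image (Sym2.map Sum.inl) ∪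
            {s(Sum.inl (st i).1, Sum.inr (i, j)), s(Sum.inl (st i).2, Sum.inr (i, j))}) := by
  intro c' hcyc' hunb'
  obtain ⟨v0, p, hp, hpe⟩ := hcyc'
  obtain ⟨e₀, he₀c, he₀⟩ := hunb'
  classical
  -- basic facts
  have hGedge : ∀ i : ι, G.Adj (st i).1 (st i).2 := by
    intro i
    obtain ⟨c, ⟨v, pc, hpc, hce⟩, htop⟩ := hT1 i
    have hm : s((st i).1, (st i).2) ∈ pc.edges := by
      rw [← List.mem_toFinset, hce]; exact htop.1
    exact pc.adj_of_mem_edges hm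
  have hwle : ∀ e ∈ G.edgeSet, w e ≤ L - 1 := by
    intro e he
    have h1 : w e ≤ sSup (w '' G.edgeSet) :=
      le_csSup ((G.edgeSet.toFinite.image w).bddAbove) ⟨e, he, rfl⟩
    rw [hL]; linarith
  have hLpos : 0 < L := by
    have h0 : (0:ℝ) ≤ sSup (w '' G.edgeSet) :=
      Real.sSup_nonneg (by rintro x ⟨e, he, rfl⟩; exact (hw e he).le)
    rw [hL]; linarith
  have hinj : Function.Injective (Sum.inl : V → V ⊕ ι × Fin (G.edgeFinset.card + 1)) :=
    Sum.inl_injective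
  have hGadj' : ∀ a b : V, G.Adj a b → G'.Adj (Sum.inl a) (Sum.inl b) := by
    intro a b hab
    rw [hG', fromEdgeSet_adj]
    refine ⟨Or.inl (Or.inl ⟨s(a,b), hab, by simp⟩), by simp [hab.ne]⟩
  have hGadj : ∀ a b : V, G'.Adj (Sum.inl a) (Sum.inl b) → G.Adj a b := by
    intro a b hab
    rw [hG', fromEdgeSet_adj] at hab
    obtain ⟨hmem, -⟩ := hab
    simp only [Set.mem_union, Set.mem_image, Set.mem_setOf_eq] at hmem
    rcases hmem with (⟨e, he, heq⟩ | ⟨i, j, heq⟩) | ⟨i, j, heq⟩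
    · have he2 : e = s(a, b) := Sym2.map.injective hinj (by rw [heq]; simp)
      exact G.mem_edgeSet.mp (he2 ▸ he)
    · rw [Sym2.eq_iff] at heq
      rcases heq with ⟨h1, h2⟩ | ⟨h1, h2⟩ <;> simp at h1 h2
    · rw [Sym2.eq_iff] at heq
      rcases heq with ⟨h1, h2⟩ | ⟨h1, h2⟩ <;> simp at h1 h2
  set φ : G →g G' := ⟨Sum.inl, fun {a b} h => hGadj' a b h⟩ with hφ
  have hInr : ∀ (z : ι × Fin (G.edgeFinset.card + 1)) (x : V ⊕ ι × Fin (G.edgeFinset.card + 1)),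
      G'.Adj (Sum.inr z) x → (x = Sum.inl (st z.1).1 ∨ x = Sum.inl (st z.1).2) := by
    rintro ⟨i, j⟩ x h
    rw [hG', fromEdgeSet_adj] at h
    obtain ⟨hmem, -⟩ := h
    simp only [Set.mem_union, Set.mem_image, Set.mem_setOf_eq] at hmem
    rcases hmem with (⟨e, he, heq⟩ | ⟨i', j', heq⟩) | ⟨i', j', heq⟩
    · exfalso
      have hm : Sum.inr (i, j) ∈ Sym2.map Sum.inl e := by
        rw [heq]; exact Sym2.mem_mk_left _ _
      rcases Sym2.mem_map.mp hm with ⟨u, -, hu⟩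
      simp at hu
    · rw [Sym2.eq_iff] at heq
      rcases heq with ⟨h1, h2⟩ | ⟨h1, h2⟩
      · simp at h1
      · left
        have h3 := Sum.inr.inj h1
        rw [Prod.mk.injEq] at h3
        obtain ⟨h4, h5⟩ := h3
        subst h4
        exact h2
    · rw [Sym2.eq_iff] at heq
      rcases heq with ⟨h1, h2⟩ | ⟨h1, h2⟩
      · simp at h1
      · right
        have h3 := Sum.inr.inj h1
        rw [Prod.mk.injEq] at h3
        obtain ⟨h4, h5⟩ := h3
        subst h4
        exact h2
  have hedge_mem : ∀ e ∈ c', e ∈ G'.edgeSet := by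
    intro e he
    rw [← hpe] at he
    exact p.edges_subset_edgeSet (List.mem_toFinset.mp he)
  have hw'bound : ∀ e ∈ c', 0 < w' e ∧ w' e ≤ L := by
    intro e he
    have he2 := hedge_mem e he
    rw [hG', edgeSet_fromEdgeSet] at he2
    obtain ⟨hmem, -⟩ := he2
    simp only [Set.mem_union, Set.mem_image, Set.mem_setOf_eq] at hmem
    rcases hmem with (⟨f, hf, rfl⟩ | ⟨i, j, rfl⟩) | ⟨i, j, rfl⟩
    · rw [hw'1 f hf]
      exact ⟨hw f hf, by linarith [hwle f hf]⟩
    · rw [hw'2 i j]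
      exact ⟨hLpos, le_refl L⟩
    · rw [hw'3 i j]
      have hst : s((st i).1, (st i).2) ∈ G.edgeSet := G.mem_edgeSet.mpr (hGedge i)
      constructor
      · linarith [hwle _ hst]
      · linarith [hw _ hst]
  have hpos : ∀ e ∈ c', 0 < w' e := fun e he => (hw'bound e he).1
  have hle : ∀ e ∈ c', w' e ≤ L := fun e he => (hw'bound e he).2
  have hcard3 : 3 ≤ c'.card := by
    rw [← hpe, List.toFinset_card_of_nodup hp.edges_nodup, SimpleGraph.Walk.length_edges]
    exact hp.three_le_length
  -- each new vertex in the cycle gives its two incident edges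
  have twoE : ∀ z : ι × Fin (G.edgeFinset.card + 1), Sum.inr z ∈ p.support →
      s(Sum.inr z, Sum.inl (st z.1).1) ∈ c' ∧ s(Sum.inr z, Sum.inl (st z.1).2) ∈ c' := by
    intro z hz
    have hp2 : (p.rotate _ hz).IsCycle := hp.rotate hz
    have hperm : (p.rotate _ hz).edges.toFinset = c' := by
      rw [← hpe]
      exact List.toFinset_eq_of_perm _ _ (p.rotate_edges _ hz).perm
    obtain ⟨x, y, hx, hy, r, hdec⟩ := cycle_decomp' (p.rotate _ hz) hp2
    have hedges : (p.rotate _ hz).edges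
        = s(Sum.inr z, x) :: (r.edges ++ [s(y, Sum.inr z)]) := by
      rw [hdec]
      simp [SimpleGraph.Walk.edges_concat, List.concat_eq_append]
    have hxy : x ≠ y := by
      have hnd := hp2.edges_nodup
      rw [hedges] at hnd
      intro hxyeq
      subst hxyeq
      have hmm : s(Sum.inr z, x) ∈ r.edges ++ [s(x, Sum.inr z)] := by
        simp [Sym2.eq_swap]
      exact (List.nodup_cons.mp hnd).1 hmm
    have hmem1 : s(Sum.inr z, x) ∈ c' := by
      rw [← hperm, hedges]; simp
    have hmem2 : s(Sum.inr z, y) ∈ c' := by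
      rw [← hperm, hedges]
      simp [List.mem_toFinset, Sym2.eq_swap]
    rcases hInr z x hx with rfl | rfl <;> rcases hInr z y hy.symm with h | h
    · exact absurd (h ▸ rfl) hxy
    · subst h; exact ⟨hmem1, hmem2⟩
    · subst h; exact ⟨hmem2, hmem1⟩
    · exact absurd (h ▸ rfl) hxy
  -- at most one new vertex on the cycle
  have honeinr : ∀ e ∈ G'.edgeSet, ∀ z1 z2 : ι × Fin (G.edgeFinset.card + 1),
      Sum.inr z1 ∈ e → Sum.inr z2 ∈ e → z1 = z2 := by
    intro e he z1 z2 h1 h2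
    rw [hG', edgeSet_fromEdgeSet] at he
    obtain ⟨hmem, -⟩ := he
    simp only [Set.mem_union, Set.mem_image, Set.mem_setOf_eq] at hmem
    rcases hmem with (⟨f, hf, rfl⟩ | ⟨i, j, rfl⟩) | ⟨i, j, rfl⟩
    · rcases Sym2.mem_map.mp h1 with ⟨u, -, hu⟩; simp at hu
    · rw [Sym2.mem_iff] at h1 h2
      rcases h1 with h1 | h1 <;> rcases h2 with h2 | h2 <;>
        first
        | exact absurd h1 Sum.inr_ne_inl
        | exact absurd h2 Sum.inr_ne_inl
        | exact (Sum.inr_injective h1).trans (Sum.inr_injective h2).symm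
    · rw [Sym2.mem_iff] at h1 h2
      rcases h1 with h1 | h1 <;> rcases h2 with h2 | h2 <;>
        first
        | exact absurd h1 Sum.inr_ne_inl
        | exact absurd h2 Sum.inr_ne_inl
        | exact (Sum.inr_injective h1).trans (Sum.inr_injective h2).symm
  have huniq : ∀ z1 z2 : ι × Fin (G.edgeFinset.card + 1),
      Sum.inr z1 ∈ p.support → Sum.inr z2 ∈ p.support → z1 = z2 := by
    intro z1 z2 h1 h2
    by_contra hne
    obtain ⟨hA1, hA2⟩ := twoE z1 h1
    obtain ⟨hB1, hB2⟩ := twoE z2 h2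
    have key : ∀ z : ι × Fin (G.edgeFinset.card + 1),
        s(Sum.inr z, Sum.inl (st z.1).1) ∈ c' → s(Sum.inr z, Sum.inl (st z.1).2) ∈ c' →
        Sum.inr z ∉ e₀ → False := by
      rintro ⟨i, j⟩ hA hB hm
      have hLne : s(Sum.inr (i,j), Sum.inl (st i).1) ≠ e₀ :=
        fun h => hm (h ▸ Sym2.mem_mk_left _ _)
      have hTne : s(Sum.inr (i,j), Sum.inl (st i).2) ≠ e₀ :=
        fun h => hm (h ▸ Sym2.mem_mk_left _ _)
      have hstne : (st i).1 ≠ (st i).2 := (hGedge i).ne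
      have hLT : s(Sum.inr (i,j), Sum.inl (st i).1) ≠ s(Sum.inr (i,j), Sum.inl (st i).2) := by
        intro h
        rw [Sym2.eq_iff] at h
        rcases h with ⟨-, h2⟩ | ⟨h1, -⟩
        · exact hstne (Sum.inl.inj h2)
        · simp at h1
      have hsub : ({s(Sum.inr (i,j), Sum.inl (st i).1), s(Sum.inr (i,j), Sum.inl (st i).2)} :
          Finset (Sym2 (V ⊕ ι × Fin (G.edgeFinset.card + 1)))) ⊆ c'.erase e₀ := by
        intro a ha
        rcases Finset.mem_insert.mp ha with rfl | ha
        · exact Finset.mem_erase.mpr ⟨hLne, hA⟩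
        · rw [Finset.mem_singleton] at ha
          subst ha
          exact Finset.mem_erase.mpr ⟨hTne, hB⟩
      have hsum := Finset.sum_le_sum_of_subset_of_nonneg hsub
        (fun a ha _ => (hpos a (Finset.mem_of_mem_erase ha)).le)
      rw [Finset.sum_pair hLT] at hsum
      have hwL : w' s(Sum.inr (i,j), Sum.inl (st i).1) = L := by
        rw [Sym2.eq_swap]; exact hw'2 i j
      have hwT : w' s(Sum.inr (i,j), Sum.inl (st i).2) = L - w s((st i).1, (st i).2) := by
        rw [Sym2.eq_swap]; exact hw'3 i j
      have hwi := hwle _ (G.mem_edgeSet.mpr (hGedge i))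
      have he₀le := hle e₀ he₀c
      rw [hwL, hwT] at hsum
      linarith
    have hmiss : Sum.inr z1 ∉ e₀ ∨ Sum.inr z2 ∉ e₀ := by
      by_contra hc
      push_neg at hc
      exact hne (honeinr e₀ (hedge_mem e₀ he₀c) z1 z2 hc.1 hc.2)
    rcases hmiss with hm | hm
    · exact key z1 hA1 hA2 hm
    · exact key z2 hB1 hB2 hm
  rcases Classical.em (∃ z : ι × Fin (G.edgeFinset.card + 1), Sum.inr z ∈ p.support) with
    hInrSup | hInrSup
  · -- Case 2: the cycle goes through a new vertex
    right
    obtain ⟨⟨i, j⟩, hz⟩ := hInrSup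
    have hp2 : (p.rotate _ hz).IsCycle := hp.rotate hz
    have hperm : (p.rotate _ hz).edges.toFinset = c' := by
      rw [← hpe]
      exact List.toFinset_eq_of_perm _ _ (p.rotate_edges _ hz).perm
    obtain ⟨x, y, hx, hy, r, hdec⟩ := cycle_decomp' (p.rotate _ hz) hp2
    have hedges : (p.rotate _ hz).edges
        = s(Sum.inr (i,j), x) :: (r.edges ++ [s(y, Sum.inr (i,j))]) := by
      rw [hdec]
      simp [SimpleGraph.Walk.edges_concat, List.concat_eq_append]
    have hxy : x ≠ y := by
      have hnd := hp2.edges_nodup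
      rw [hedges] at hnd
      intro hxyeq
      subst hxyeq
      have hmm : s(Sum.inr (i,j), x) ∈ r.edges ++ [s(x, Sum.inr (i,j))] := by
        simp [Sym2.eq_swap]
      exact (List.nodup_cons.mp hnd).1 hmm
    have hconcatpath : (r.concat hy).IsPath ∧ s(Sum.inr (i,j), x) ∉ (r.concat hy).edges := by
      rw [hdec] at hp2
      exact (SimpleGraph.Walk.cons_isCycle_iff _ _).mp hp2
    have hrpath : r.IsPath := by
      have h1 := hconcatpath.1
      rw [SimpleGraph.Walk.concat_eq_append] at h1
      exact h1.of_append_left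
    have hznr : Sum.inr (i,j) ∉ r.support := by
      have hnd := hp2.support_nodup
      rw [hdec] at hnd
      simp only [SimpleGraph.Walk.support_cons, List.tail_cons,
        SimpleGraph.Walk.support_concat, List.concat_eq_append] at hnd
      have hdisj := (List.nodup_append.mp hnd).2.2
      intro hmem
      exact hdisj _ hmem _ (by simp) rfl
    have hrsup : ∀ v ∈ r.support, ∃ u, v = Sum.inl u := by
      intro v hv
      cases v with
      | inl u => exact ⟨u, rfl⟩
      | inr z' =>
        exfalso
        have hv2 : Sum.inr z' ∈ (p.rotate _ hz).support.tail := by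
          rw [hdec]
          simp only [SimpleGraph.Walk.support_cons, List.tail_cons,
            SimpleGraph.Walk.support_concat, List.concat_eq_append]
          exact List.mem_append.mpr (Or.inl hv)
        have hv3 : Sum.inr z' ∈ p.support := by
          have hrot := SimpleGraph.Walk.support_rotate p _ hz
          have := hrot.perm.mem_iff.mp hv2
          exact List.tail_subset _ this
        have := huniq z' (i,j) hv3 hz
        subst this
        exact hznr hv
    -- common continuation
    have main : ∀ (qg : G.Walk (st i).1 (st i).2), qg.IsPath →
        qg.edges.toFinset.image (Sym2.map Sum.inl) = r.edges.toFinset →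
        c' = insert s(Sum.inl (st i).1, Sum.inr (i,j))
          (insert s(Sum.inl (st i).2, Sum.inr (i,j)) r.edges.toFinset) →
        (∃ (c : Finset (Sym2 V)) (i' : ι) (j' : Fin (G.edgeFinset.card + 1)),
          IsCycleSet G c ∧ UnbalancedSet w c ∧ TopOfSet w c s((st i').1, (st i').2) ∧
          c' = (c.erase s((st i').1, (st i').2)).image (Sym2.map Sum.inl) ∪
            {s(Sum.inl (st i').1, Sum.inr (i', j')), s(Sum.inl (st i').2, Sum.inr (i', j'))}) := by
      intro qg hqgpath hqgimg hc'eq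
      set eL := s(Sum.inl (st i).1, Sum.inr (i,j)) with heL
      set eT := s(Sum.inl (st i).2, Sum.inr (i,j)) with heT
      set rfin := r.edges.toFinset with hrfin
      have hnoinr : ∀ a ∈ rfin, ∀ u : ι × Fin (G.edgeFinset.card + 1), Sum.inr u ∉ a := by
        intro a ha u hu
        rw [← hqgimg] at ha
        obtain ⟨f, -, rfl⟩ := Finset.mem_image.mp ha
        rcases Sym2.mem_map.mp hu with ⟨v', -, hv'⟩
        simp at hv'
      have hstne : (st i).1 ≠ (st i).2 := (hGedge i).ne
      have hLT : eL ≠ eT := by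
        intro h
        rw [heL, heT, Sym2.eq_iff] at h
        rcases h with ⟨h1, -⟩ | ⟨h1, -⟩
        · exact hstne (Sum.inl.inj h1)
        · simp at h1
      have hLrf : eL ∉ rfin := fun h => hnoinr _ h (i,j) (Sym2.mem_mk_right _ _)
      have hTrf : eT ∉ rfin := fun h => hnoinr _ h (i,j) (Sym2.mem_mk_right _ _)
      have hwL : w' eL = L := hw'2 i j
      have hwT : w' eT = L - w s((st i).1, (st i).2) := hw'3 i j
      have hwi := hwle _ (G.mem_edgeSet.mpr (hGedge i))
      have hwipos := hw _ (G.mem_edgeSet.mpr (hGedge i))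
      -- identify the top edge
      have he₀eq : e₀ = eL := by
        by_contra hne
        have heLmem : eL ∈ c'.erase e₀ := by
          refine Finset.mem_erase.mpr ⟨fun h => hne h.symm, ?_⟩
          rw [hc'eq]; exact Finset.mem_insert_self _ _
        have hcc : 3 ≤ c'.card := hcard3
        have h1 : (c'.erase e₀).card = c'.card - 1 := Finset.card_erase_of_mem he₀c
        have h2 : ((c'.erase e₀).erase eL).card = (c'.erase e₀).card - 1 :=
          Finset.card_erase_of_mem heLmem
        have hne2 : ((c'.erase e₀).erase eL).Nonempty := by
          rw [← Finset.card_pos]; omega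
        have hsum : ∑ f ∈ c'.erase e₀, w' f
            = w' eL + ∑ f ∈ (c'.erase e₀).erase eL, w' f :=
          (Finset.add_sum_erase _ _ heLmem).symm
        have hpos2 : 0 < ∑ f ∈ (c'.erase e₀).erase eL, w' f :=
          Finset.sum_pos (fun f hf => hpos f
            (Finset.mem_of_mem_erase (Finset.mem_of_mem_erase hf))) hne2
        have h3 := hle e₀ he₀c
        rw [hsum, hwL] at he₀
        linarith
      subst he₀eq
      have herase : c'.erase eL = insert eT rfin := by
        rw [hc'eq]
        exact Finset.erase_insert (by
          intro h
          rcases Finset.mem_insert.mp h with h | h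
          · exact hLT h
          · exact hLrf h)
      rw [herase, Finset.sum_insert hTrf, hwL, hwT] at he₀
      have hkey : ∑ f ∈ rfin, w' f < w s((st i).1, (st i).2) := by linarith
      have hsum_eq : ∑ f ∈ rfin, w' f = ∑ f ∈ qg.edges.toFinset, w f := by
        rw [← hqgimg, Finset.sum_image
          (fun a _ b _ h => Sym2.map.injective hinj h)]
        refine Finset.sum_congr rfl ?_
        intro f hf
        exact hw'1 f (qg.edges_subset_edgeSet (List.mem_toFinset.mp hf))
      have hkey2 : ∑ f ∈ qg.edges.toFinset, w f < w s((st i).1, (st i).2) := by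
        rw [← hsum_eq]; exact hkey
      have hwswap : w s((st i).2, (st i).1) = w s((st i).1, (st i).2) := by
        rw [Sym2.eq_swap]
      have hnotin : s((st i).2, (st i).1) ∉ qg.edges := by
        intro hmem
        have h1 : s((st i).2, (st i).1) ∈ qg.edges.toFinset := List.mem_toFinset.mpr hmem
        have h2 : w s((st i).2, (st i).1) ≤ ∑ f ∈ qg.edges.toFinset, w f :=
          Finset.single_le_sum
            (fun f hf => (hw f (qg.edges_subset_edgeSet (List.mem_toFinset.mp hf))).le) h1
        rw [hwswap] at h2
        linarith
      have hnotin2 : s((st i).2, (st i).1) ∉ qg.edges.toFinset :=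
        fun h => hnotin (List.mem_toFinset.mp h)
      set cyc : G.Walk (st i).2 (st i).2 := SimpleGraph.Walk.cons (hGedge i).symm qg with hcyc
      have hcyccyc : cyc.IsCycle :=
        (SimpleGraph.Walk.cons_isCycle_iff qg (hGedge i).symm).mpr ⟨hqgpath, hnotin⟩
      set c : Finset (Sym2 V) := cyc.edges.toFinset with hcdef
      have hc : c = insert s((st i).2, (st i).1) qg.edges.toFinset := by
        rw [hcdef, hcyc]
        simp [SimpleGraph.Walk.edges_cons]
      have hswap : s((st i).1, (st i).2) = s((st i).2, (st i).1) := Sym2.eq_swap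
      have herase2 : c.erase s((st i).1, (st i).2) = qg.edges.toFinset := by
        rw [hc, hswap]
        exact Finset.erase_insert hnotin2
      have htopc : TopOfSet w c s((st i).1, (st i).2) := by
        constructor
        · rw [hc]
          exact Finset.mem_insert.mpr (Or.inl hswap)
        · rw [herase2]
          exact hkey2
      refine ⟨c, i, j, ⟨(st i).2, cyc, hcyccyc, rfl⟩, ⟨_, htopc⟩, htopc, ?_⟩
      rw [herase2, hqgimg, hc'eq]
      ext a
      simp only [Finset.mem_insert, Finset.mem_union, Finset.mem_singleton]
      tauto
    -- two orientations
    have hc'base : c' = ((s(Sum.inr (i,j), x) :: (r.edges ++ [s(y, Sum.inr (i,j))])) :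
        List (Sym2 (V ⊕ ι × Fin (G.edgeFinset.card + 1)))).toFinset := by
      rw [← hperm, hedges]
    rcases hInr (i,j) x hx with rfl | rfl <;> rcases hInr (i,j) y hy.symm with h | h
    · exact absurd h.symm hxy
    · -- x = inl s, y = inl t
      subst h
      obtain ⟨q, hq⟩ := lift_walk' φ hinj hGadj r hrsup (st i).1 (st i).2 rfl rfl
      rw [SimpleGraph.Walk.copy_rfl_rfl] at hq
      have hqpath : q.IsPath := by
        rw [← SimpleGraph.Walk.map_isPath_iff_of_injective (f := φ) (p := q) hinj, hq]
        exact hrpath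
      have hqedges : q.edges.toFinset.image (Sym2.map Sum.inl) = r.edges.toFinset := by
        rw [← list_toFinset_map', ← hq, SimpleGraph.Walk.edges_map]
        rfl
      refine main q hqpath hqedges ?_
      rw [hc'base]
      ext a
      simp only [List.toFinset_cons, List.toFinset_append, List.toFinset_cons,
        List.toFinset_nil, Finset.mem_insert, Finset.mem_union, Finset.mem_singleton,
        List.mem_toFinset, insert_empty_eq]
      constructor
      · rintro (rfl | h | rfl)
        · exact Or.inl Sym2.eq_swap
        · exact Or.inr (Or.inr (h))
        · exact Or.inr (Or.inl rfl)
      · rintro (rfl | rfl | h)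
        · exact Or.inl Sym2.eq_swap
        · exact Or.inr (Or.inr rfl)
        · exact Or.inr (Or.inl (h))
    · -- x = inl t, y = inl s
      subst h
      obtain ⟨q, hq⟩ := lift_walk' φ hinj hGadj r hrsup (st i).2 (st i).1 rfl rfl
      rw [SimpleGraph.Walk.copy_rfl_rfl] at hq
      have hqpath : q.IsPath := by
        rw [← SimpleGraph.Walk.map_isPath_iff_of_injective (f := φ) (p := q) hinj, hq]
        exact hrpath
      have hqedges : q.reverse.edges.toFinset.image (Sym2.map Sum.inl) = r.edges.toFinset := by
        rw [SimpleGraph.Walk.edges_reverse, List.toFinset_reverse,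
          ← list_toFinset_map', ← hq, SimpleGraph.Walk.edges_map]
        rfl
      refine main q.reverse hqpath.reverse hqedges ?_
      rw [hc'base]
      ext a
      simp only [List.toFinset_cons, List.toFinset_append, List.toFinset_cons,
        List.toFinset_nil, Finset.mem_insert, Finset.mem_union, Finset.mem_singleton,
        List.mem_toFinset, insert_empty_eq]
      constructor
      · rintro (rfl | h | rfl)
        · exact Or.inr (Or.inl Sym2.eq_swap)
        · exact Or.inr (Or.inr (h))
        · exact Or.inl rfl
      · rintro (rfl | rfl | h)
        · exact Or.inr (Or.inr rfl)
        · exact Or.inl Sym2.eq_swap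
        · exact Or.inr (Or.inl (h))
    · exact absurd h.symm hxy
  · -- Case 1: no new vertex, the cycle lives in G
    left
    push_neg at hInrSup
    have hall : ∀ v ∈ p.support, ∃ u, v = Sum.inl u := by
      intro v hv
      cases v with
      | inl u => exact ⟨u, rfl⟩
      | inr z => exact absurd hv (hInrSup z)
    obtain ⟨u0, hv0⟩ := hall v0 p.start_mem_support
    subst hv0
    obtain ⟨q, hq⟩ := lift_walk' φ hinj hGadj p hall u0 u0 rfl rfl
    rw [SimpleGraph.Walk.copy_rfl_rfl] at hq
    have hqcyc : q.IsCycle := by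
      rw [← SimpleGraph.Walk.map_isCycle_iff_of_injective (f := φ) (p := q) hinj, hq]
      exact hp
    have himg : c' = q.edges.toFinset.image (Sym2.map Sum.inl) := by
      rw [← hpe, ← hq, SimpleGraph.Walk.edges_map, list_toFinset_map']
      rfl
    refine ⟨q.edges.toFinset, ⟨u0, q, hqcyc, rfl⟩, ?_, himg⟩
    -- unbalancedness transfers
    obtain ⟨f, hf, hfe⟩ := Finset.mem_image.mp (himg ▸ he₀c)
    refine ⟨f, hf, ?_⟩
    have hfedge : ∀ g ∈ q.edges.toFinset, g ∈ G.edgeSet :=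
      fun g hg => q.edges_subset_edgeSet (List.mem_toFinset.mp hg)
    have heqsum : ∑ g ∈ q.edges.toFinset.erase f, w g
        = ∑ g ∈ c'.erase e₀, w' g := by
      rw [himg, ← hfe, ← Finset.image_erase (Sym2.map.injective hinj),
        Finset.sum_image (fun a _ b _ h => Sym2.map.injective hinj h)]
      refine Finset.sum_congr rfl ?_
      intro g hg
      exact (hw'1 g (hfedge g (Finset.mem_of_mem_erase hg))).symm
    have hwf : w' e₀ = w f := by
      rw [← hfe]
      exact hw'1 f (hfedge f hf)
    rw [heqsum, ← hwf]
    exact he₀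
end
end

section
/- Let G=(V,E) be a general dissimilarity graph containing at least one unbalanced cycle, so that δ(G)>0. Then for any edge e=(s,t)∈E: if w(e) = d(s,t) + δ(G) then N_T(e,δ(G)) = csp(s,t), and otherwise N_T(e,δ(G)) = 0. -/
open SimpleGraph

noncomputable section

variable {V : Type*}

section Aux

open SimpleGraph Walk

variable {G : SimpleGraph V}

private lemma loop_path_nil {a : V} (q : G.Walk a a) (hq : q.IsPath) : q = Walk.nil := by
  cases q with
  | nil => rfl
  | cons h q' =>
    rw [Walk.cons_isPath_iff] at hq
    exact absurd q'.end_mem_support hq.2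

private lemma first_edge {a b x : V} (p : G.Walk a x) (hp : p.IsPath)
    (he : s(a, b) ∈ p.edges) :
    ∃ (h : G.Adj a b) (q : G.Walk b x), p = Walk.cons h q := by
  cases p with
  | nil => simp at he
  | @cons _ c _ h q =>
    rw [Walk.edges_cons, List.mem_cons] at he
    rcases he with he | he
    · obtain rfl : b = c := Sym2.congr_right.mp he
      exact ⟨h, q, rfl⟩
    · exfalso
      rw [Walk.cons_isPath_iff] at hp
      exact hp.2 (q.fst_mem_support_of_mem_edges he)

private lemma path_eq_of_perm {a x : V} (p : G.Walk a x) :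
    ∀ q : G.Walk a x, p.IsPath → q.IsPath → p.edges.Perm q.edges → p = q := by
  induction p with
  | nil =>
    intro q _ hq _
    exact (loop_path_nil q hq).symm
  | @cons a c x h p' ih =>
    intro q hp hq hperm
    have hmem : s(a, c) ∈ q.edges := hperm.mem_iff.mp (by simp)
    obtain ⟨h2, q', rfl⟩ := first_edge q hq hmem
    rw [Walk.cons_isPath_iff] at hp hq
    have hperm' : p'.edges.Perm q'.edges := by
      have := hperm
      rw [Walk.edges_cons, Walk.edges_cons] at this
      exact this.cons_inv
    rw [ih q' hp.1 hq.1 hperm']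

private lemma path_eq_of_toFinset_eq [DecidableEq V] {a x : V} (p q : G.Walk a x)
    (hp : p.IsPath) (hq : q.IsPath) (h : p.edges.toFinset = q.edges.toFinset) : p = q :=
  path_eq_of_perm p q hp hq
    (List.perm_of_nodup_nodup_toFinset_eq hp.isTrail.edges_nodup hq.isTrail.edges_nodup h)

/-- the only path from `s` to `t` through the edge `s(s,t)` is the edge itself -/
private lemma path_with_edge {s t : V} (hst : G.Adj s t) (p : G.Walk s t) (hp : p.IsPath)
    (he : s(s, t) ∈ p.edges) : wlen w p = w s(s, t) := by
  obtain ⟨h, q, rfl⟩ := first_edge p hp he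
  rw [Walk.cons_isPath_iff] at hp
  rw [loop_path_nil q hp.1]
  simp [wlen]

private lemma wlen_eq_sum [DecidableEq V] (w : Sym2 V → ℝ) {a x : V} (p : G.Walk a x)
    (hp : p.IsPath) : ∑ f ∈ p.edges.toFinset, w f = wlen w p :=
  List.sum_toFinset w hp.isTrail.edges_nodup

private lemma deficit_eq [DecidableEq V] (w : Sym2 V → ℝ) (c : Finset (Sym2 V)) (e : Sym2 V)
    (he : e ∈ c) (hpos : ∀ f ∈ c, 0 < w f) (htop : ∑ f ∈ c.erase e, w f < w e) :
    deficitSet w c = w e - ∑ f ∈ c.erase e, w f := by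
  have hmax : ∀ f ∈ c, w f ≤ w e := by
    intro f hf
    by_cases hfe : f = e
    · exact le_of_eq (by rw [hfe])
    · have h1 : w f ≤ ∑ g ∈ c.erase e, w g :=
        Finset.single_le_sum (fun g hg => (hpos g (Finset.mem_of_mem_erase hg)).le)
          (Finset.mem_erase.mpr ⟨hfe, hf⟩)
      linarith
  have hsup : sSup (w '' (c : Set (Sym2 V))) = w e :=
    IsGreatest.csSup_eq ⟨⟨e, he, rfl⟩, by rintro x ⟨f, hf, rfl⟩; exact hmax f hf⟩
  rw [deficitSet, hsup, ← Finset.add_sum_erase c w he]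
  ring

private lemma sum_insert_wlen [DecidableEq V] (w : Sym2 V → ℝ) {a x : V} (p : G.Walk a x)
    (hp : p.IsPath) (e : Sym2 V) (hep : e ∉ p.edges) :
    ∑ f ∈ insert e p.edges.toFinset, w f = w e + wlen w p := by
  rw [Finset.sum_insert (by simpa using hep), wlen_eq_sum w p hp]

/-- decompose a cycle through `s(s,t)` into the edge plus a path -/
private lemma cycle_decomp [DecidableEq V] {s t : V} (hst : G.Adj s t)
    (c : Finset (Sym2 V)) (hc : IsCycleSet G c) (hec : s(s, t) ∈ c) :
    ∃ p : G.Walk s t, p.IsPath ∧ s(s, t) ∉ p.edges ∧ c = insert s(s, t) p.edges.toFinset := by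
  have key : ∀ q1 : G.Walk s s, q1.IsCycle → s(s, t) ∈ q1.edges →
      ∃ p : G.Walk s t, p.IsPath ∧ s(s, t) ∉ p.edges ∧
        q1.edges.toFinset = insert s(s, t) p.edges.toFinset := by
    intro q1 hq1 he1
    cases q1 with
    | nil => exact absurd hq1 Walk.IsCycle.not_of_nil
    | @cons _ b _ h r =>
      have hr := (Walk.cons_isCycle_iff r h).mp hq1
      rw [Walk.edges_cons, List.mem_cons] at he1
      rcases he1 with he1 | he1
      · obtain rfl : t = b := Sym2.congr_right.mp he1
        refine ⟨r.reverse, hr.1.reverse, ?_, ?_⟩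
        · rw [Walk.edges_reverse, List.mem_reverse]; exact hr.2
        · rw [Walk.edges_cons, List.toFinset_cons, Walk.edges_reverse, List.toFinset_reverse]
      · -- s(s,t) is an interior edge of r, hence the last edge of r
        have hrev : s(s, t) ∈ r.reverse.edges := by
          rw [Walk.edges_reverse, List.mem_reverse]; exact he1
        obtain ⟨h2, r2, hr2⟩ := first_edge r.reverse hr.1.reverse hrev
        have hr2path : r2.IsPath ∧ s ∉ r2.support := by
          have := hr.1.reverse
          rw [hr2, Walk.cons_isPath_iff] at this
          exact this
        refine ⟨Walk.cons h r2.reverse, ?_, ?_, ?_⟩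
        · rw [Walk.cons_isPath_iff]
          refine ⟨hr2path.1.reverse, ?_⟩
          rw [Walk.support_reverse, List.mem_reverse]
          exact hr2path.2
        · rw [Walk.edges_cons, List.mem_cons]
          rintro (hbad | hbad)
          · rw [← hbad] at hr
            exact hr.2 he1
          · rw [Walk.edges_reverse, List.mem_reverse] at hbad
            exact hr2path.2 (r2.fst_mem_support_of_mem_edges hbad)
        · have h3 : r.edges.toFinset = insert s(s, t) r2.edges.toFinset := by
            have : r.edges.toFinset = r.reverse.edges.toFinset := by
              rw [Walk.edges_reverse, List.toFinset_reverse]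
            rw [this, hr2, Walk.edges_cons, List.toFinset_cons]
          rw [Walk.edges_cons, List.toFinset_cons, h3, Walk.edges_cons, List.toFinset_cons,
            Walk.edges_reverse, List.toFinset_reverse, Finset.insert_comm]
  obtain ⟨v, q, hq, rfl⟩ := hc
  have heq : s(s, t) ∈ q.edges := List.mem_toFinset.mp hec
  have hs : s ∈ q.support := q.fst_mem_support_of_mem_edges heq
  have hfs : (q.rotate s hs).edges.toFinset = q.edges.toFinset :=
    List.toFinset_eq_of_perm _ _ (q.rotate_edges s hs).perm
  obtain ⟨p, hp, hep, hfin⟩ := key (q.rotate s hs) (hq.rotate hs)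
    (by rw [← List.mem_toFinset, hfs, List.mem_toFinset]; exact heq)
  exact ⟨p, hp, hep, by rw [← hfs, hfin]⟩

end Aux


/-- For any edge `e = (s,t)` of a general dissimilarity graph containing at
least one unbalanced cycle: if `w(e) = d(s,t) + δ(G)` then
`N_T(e, δ(G)) = csp(s,t)`, and otherwise `N_T(e, δ(G)) = 0`. -/
theorem stmt15 [Fintype V] [DecidableEq V] (G : SimpleGraph V)
    (hconn : G.Connected) (w : Sym2 V → ℝ) (hw : ∀ e ∈ G.edgeSet, 0 < w e)
    (hunb : ∃ c : Finset (Sym2 V), IsCycleSet G c ∧ UnbalancedSet w c)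
    (s t : V) (hst : G.Adj s t) :
    (w s(s, t) = spDist G w s t + deltaG G w →
      NT G w s(s, t) (deltaG G w) = csp G w s t) ∧
    (w s(s, t) ≠ spDist G w s t + deltaG G w →
      NT G w s(s, t) (deltaG G w) = 0) := by
  classical
  set e : Sym2 V := s(s, t) with he_def
  set δ : ℝ := deltaG G w with hδ_def
  have heE : e ∈ G.edgeSet := hst
  have hfinD : {x : ℝ | ∃ c : Finset (Sym2 V), IsCycleSet G c ∧ deficitSet w c = x}.Finite :=
    Set.Finite.subset (Set.finite_range (deficitSet w)) (by rintro x ⟨c, _, rfl⟩; exact ⟨c, rfl⟩)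
  have hδ_ub : ∀ c : Finset (Sym2 V), IsCycleSet G c → deficitSet w c ≤ δ := fun c hc =>
    le_csSup hfinD.bddAbove ⟨c, hc, rfl⟩
  have hcycE : ∀ c : Finset (Sym2 V), IsCycleSet G c → ∀ f ∈ c, f ∈ G.edgeSet := by
    rintro c ⟨v, q, hq, rfl⟩ f hf
    exact q.edges_subset_edgeSet (List.mem_toFinset.mp hf)
  have hδ_pos : 0 < δ := by
    obtain ⟨c0, hc0, f, hf, htopf⟩ := hunb
    have hd : deficitSet w c0 = w f - ∑ g ∈ c0.erase f, w g :=
      deficit_eq w c0 f hf (fun g hg => hw g (hcycE c0 hc0 g hg)) htopf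
    have h1 := hδ_ub c0 hc0
    rw [hd] at h1
    linarith
  -- shortest path machinery
  have hSfin : {x : ℝ | ∃ p : G.Walk s t, p.IsPath ∧ wlen w p = x}.Finite := by
    have : Finite (G.Path s t) := Finite.of_fintype _
    refine Set.Finite.subset (Set.finite_range (fun p : G.Path s t => wlen w p.1)) ?_
    rintro x ⟨p, hp, rfl⟩
    exact ⟨⟨p, hp⟩, rfl⟩
  have hSne : {x : ℝ | ∃ p : G.Walk s t, p.IsPath ∧ wlen w p = x}.Nonempty := by
    obtain ⟨q⟩ := hconn.preconnected s t
    exact ⟨wlen w q.toPath.1, q.toPath.1, q.toPath.2, rfl⟩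
  have hsp_mem : ∃ p0 : G.Walk s t, p0.IsPath ∧ wlen w p0 = spDist G w s t :=
    hSne.csInf_mem hSfin
  have hsp_le : ∀ p : G.Walk s t, p.IsPath → spDist G w s t ≤ wlen w p := fun p hp =>
    csInf_le hSfin.bddBelow ⟨p, hp, rfl⟩
  have hsp_ge : w e - δ ≤ spDist G w s t := by
    obtain ⟨p0, hp0, hl0⟩ := hsp_mem
    by_cases hem : e ∈ p0.edges
    · have h0 : wlen w p0 = w e := path_with_edge hst p0 hp0 hem
      rw [h0] at hl0
      rw [← hl0]
      linarith
    · have hq : (Walk.cons hst p0.reverse).IsCycle := by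
        rw [Walk.cons_isCycle_iff]
        exact ⟨hp0.reverse, by rw [Walk.edges_reverse, List.mem_reverse]; exact hem⟩
      set c0 : Finset (Sym2 V) := (Walk.cons hst p0.reverse).edges.toFinset with hc0
      have hcyc0 : IsCycleSet G c0 := ⟨s, _, hq, rfl⟩
      have hc0eq : c0 = insert e p0.edges.toFinset := by
        rw [hc0, Walk.edges_cons, List.toFinset_cons, Walk.edges_reverse, List.toFinset_reverse]
      have hsum : ∑ f ∈ c0, w f = w e + wlen w p0 := by
        rw [hc0eq]; exact sum_insert_wlen w p0 hp0 e hem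
      have hsup_ge : w e ≤ sSup (w '' (c0 : Set (Sym2 V))) := by
        apply le_csSup (((c0 : Set (Sym2 V)).toFinite.image w).bddAbove)
        exact ⟨e, by rw [hc0eq]; simp, rfl⟩
      have hd0 : deficitSet w c0 = 2 * sSup (w '' (c0 : Set (Sym2 V))) - ∑ f ∈ c0, w f := rfl
      have h1 := hδ_ub c0 hcyc0
      rw [hd0, hsum] at h1
      rw [← hl0]
      linarith
  -- decomposition of a relevant cycle
  have hdecomp : ∀ c : Finset (Sym2 V), IsCycleSet G c → TopOfSet w c e → deficitSet w c = δ →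
      ∃ p : G.Walk s t, p.IsPath ∧ e ∉ p.edges ∧ c = insert e p.edges.toFinset ∧
        wlen w p = w e - δ := by
    intro c hcyc htop hdef
    obtain ⟨p, hp, hep, hceq⟩ := cycle_decomp hst c hcyc htop.1
    have herase : c.erase e = p.edges.toFinset := by
      rw [hceq, Finset.erase_insert (by simpa using hep)]
    have hd : deficitSet w c = w e - wlen w p := by
      rw [deficit_eq w c e htop.1 (fun g hg => hw g (hcycE c hcyc g hg)) htop.2, herase,
        wlen_eq_sum w p hp]
    rw [hdef] at hd
    exact ⟨p, hp, hep, hceq, by linarith⟩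
  constructor
  · intro hwe
    have hep' : ∀ p : G.Walk s t, p.IsPath → wlen w p = spDist G w s t → e ∉ p.edges := by
      intro p hp hlen hmem
      have h0 : wlen w p = w e := path_with_edge hst p hp hmem
      rw [hlen] at h0
      linarith
    have hF : ∀ p : {p : G.Walk s t // p.IsPath ∧ wlen w p = spDist G w s t},
        IsCycleSet G (insert e p.1.edges.toFinset) ∧
          TopOfSet w (insert e p.1.edges.toFinset) e ∧
          deficitSet w (insert e p.1.edges.toFinset) = δ := by
      rintro ⟨p, hp, hlen⟩
      have hep : e ∉ p.edges := hep' p hp hlen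
      have hcyc : IsCycleSet G (insert e p.edges.toFinset) := by
        refine ⟨s, Walk.cons hst p.reverse, ?_, ?_⟩
        · rw [Walk.cons_isCycle_iff]
          exact ⟨hp.reverse, by rw [Walk.edges_reverse, List.mem_reverse]; exact hep⟩
        · rw [Walk.edges_cons, List.toFinset_cons, Walk.edges_reverse, List.toFinset_reverse]
      have herase : (insert e p.edges.toFinset).erase e = p.edges.toFinset :=
        Finset.erase_insert (by simpa using hep)
      have hsumP : ∑ f ∈ p.edges.toFinset, w f = wlen w p := wlen_eq_sum w p hp
      have htop : TopOfSet w (insert e p.edges.toFinset) e := by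
        refine ⟨Finset.mem_insert_self _ _, ?_⟩
        rw [herase, hsumP, hlen]
        linarith
      have hdef : deficitSet w (insert e p.edges.toFinset) = δ := by
        rw [deficit_eq w _ e htop.1 ?_ htop.2, herase, hsumP, hlen]
        · linarith
        · intro g hg
          apply hw
          rcases Finset.mem_insert.mp hg with rfl | hg
          · exact heE
          · exact p.edges_subset_edgeSet (List.mem_toFinset.mp hg)
      exact ⟨hcyc, htop, hdef⟩
    let F : {p : G.Walk s t // p.IsPath ∧ wlen w p = spDist G w s t} →
        {c : Finset (Sym2 V) // IsCycleSet G c ∧ TopOfSet w c e ∧ deficitSet w c = δ} :=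
      fun p => ⟨insert e p.1.edges.toFinset, hF p⟩
    have hbij : Function.Bijective F := by
      constructor
      · rintro ⟨p, hp, hlp⟩ ⟨q, hq, hlq⟩ h
        have h' : insert e p.edges.toFinset = insert e q.edges.toFinset :=
          congrArg Subtype.val h
        have hpe := hep' p hp hlp
        have hqe := hep' q hq hlq
        have h'' : p.edges.toFinset = q.edges.toFinset := by
          have := congrArg (fun c => Finset.erase c e) h'
          simpa [Finset.erase_insert, (by simpa using hpe : e ∉ p.edges.toFinset),
            (by simpa using hqe : e ∉ q.edges.toFinset)] using this
        exact Subtype.ext (path_eq_of_toFinset_eq p q hp hq h'')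
      · rintro ⟨c, hcyc, htop, hdef⟩
        obtain ⟨p, hp, hep, hceq, hwl⟩ := hdecomp c hcyc htop hdef
        refine ⟨⟨p, hp, by linarith⟩, ?_⟩
        exact Subtype.ext hceq.symm
    unfold NT csp
    exact (Nat.card_eq_of_bijective F hbij).symm
  · intro hwne
    have hempty : IsEmpty
        {c : Finset (Sym2 V) // IsCycleSet G c ∧ TopOfSet w c e ∧ deficitSet w c = δ} := by
      constructor
      rintro ⟨c, hcyc, htop, hdef⟩
      obtain ⟨p, hp, hep, hceq, hwl⟩ := hdecomp c hcyc htop hdef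
      have h1 := hsp_le p hp
      exact hwne (by linarith)
    unfold NT
    exact Nat.card_of_isEmpty
end
end
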